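/- arXiv:1712.08981 — 7 statements merged into one kernel-verified Lean document; each statement's English description precedes it below -/
import Mathlib

section
/- Let A ∈ M_r(ℂ) be a normal matrix (A·A* = A*·A), let ε > 0, let α ∈ ℂ, and let v ∈ ℂ^r be a nonzero vector with ‖(A − α·I)·v‖ ≤ ε·‖v‖. Then A has an eigenvalue β with |β − α| ≤ ε·r. -/
open scoped Matrix Matrix.Norms.L2Operator NNReal Pointwise

noncomputable section

section Aux

variable {n : Type*} [Fintype n] [DecidableEq n]

lemma aux_eval_charpoly (A : Matrix n n ℂ) (β : ℂ) :
    (Matrix.charpoly A).eval β = (Matrix.scalar n β - A).det := by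
  rw [Matrix.charpoly, eval_det, Matrix.matPolyEquiv_charmatrix]
  simp

lemma aux_mem_roots_iff (A : Matrix n n ℂ) (β : ℂ) :
    β ∈ (Matrix.charpoly A).roots ↔ β ∈ spectrum ℂ A := by
  rw [Polynomial.mem_roots (Matrix.charpoly_monic A).ne_zero, Polynomial.IsRoot,
    aux_eval_charpoly, spectrum.mem_iff, Matrix.isUnit_iff_isUnit_det, isUnit_iff_ne_zero,
    not_not]
  have : (algebraMap ℂ (Matrix n n ℂ)) β = Matrix.scalar n β := rfl
  rw [this]

lemma aux_normal (A : Matrix n n ℂ) (hA : A * Aᴴ = Aᴴ * A) (α : ℂ) :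
    star (A - α • 1) * (A - α • 1) = (A - α • 1) * star (A - α • 1) := by
  simp only [star_sub, star_smul, star_one, Matrix.star_eq_conjTranspose,
    sub_mul, mul_sub, Matrix.smul_mul, Matrix.mul_smul, Matrix.one_mul, Matrix.mul_one,
    smul_smul, hA]
  rw [mul_comm α (star α)]
  abel

instance auxCStar : CStarAlgebra (Matrix n n ℂ) := Matrix.instCStarAlgebra

lemma aux_inv_norm (B : Matrix n n ℂ) (hN : star B * B = B * star B)
    (u : (Matrix n n ℂ)ˣ) (hu : (u : Matrix n n ℂ) = B) (m : ℝ≥0) (hm : 0 < m)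
    (hspec : ∀ z ∈ spectrum ℂ B, m ≤ ‖z‖₊) :
    ‖(↑u⁻¹ : Matrix n n ℂ)‖₊ ≤ m⁻¹ := by
  haveI : IsStarNormal (↑u⁻¹ : Matrix n n ℂ) := by
    constructor
    have hc : Commute (star B) B := hN
    have hc' : Commute ((star u : (Matrix n n ℂ)ˣ) : Matrix n n ℂ) (u : Matrix n n ℂ) := by
      rw [Units.coe_star, hu]; exact hc
    rw [← Units.coe_star_inv]
    exact hc'.units_inv_left.units_inv_right
  have hrad := IsStarNormal.spectralRadius_eq_nnnorm (↑u⁻¹ : Matrix n n ℂ)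
  rw [← ENNReal.coe_le_coe, ← hrad, spectralRadius]
  refine iSup₂_le fun k hk => ?_
  have hk0 : k ≠ 0 := by
    rintro rfl
    exact (spectrum.zero_mem_iff ℂ).mp hk (u⁻¹).isUnit
  have hmem : ((((Units.mk0 k hk0)⁻¹ : ℂˣ)) : ℂ) ∈ spectrum ℂ ((u : Matrix n n ℂ)) := by
    rw [spectrum.inv_mem_iff]
    simpa using hk
  rw [hu] at hmem
  have hge := hspec _ hmem
  rw [show ((((Units.mk0 k hk0)⁻¹ : ℂˣ)) : ℂ) = k⁻¹ by simp, nnnorm_inv] at hge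
  have : ‖k‖₊ ≤ m⁻¹ := by
    rw [← inv_inv ‖k‖₊]
    exact inv_anti₀ hm hge
  exact_mod_cast this

end Aux

/-- Approximate-eigenvalue lemma for normal matrices (Lemma 13.11.11.2 of the paper): if a
normal matrix `A` almost annihilates a nonzero vector `v` after shifting by `α`, then `A` has an
eigenvalue within distance `ε·r` of `α`. -/
theorem normal_approx_eigenvalue (r : ℕ) (A : Matrix (Fin r) (Fin r) ℂ)
    (hA : A * Aᴴ = Aᴴ * A) (ε : ℝ) (hε : 0 < ε) (α : ℂ)
    (v : EuclideanSpace ℂ (Fin r)) (hv : v ≠ 0)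
    (h : ‖Matrix.toEuclideanCLM (𝕜 := ℂ) (A - α • 1) v‖ ≤ ε * ‖v‖) :
    ∃ β ∈ (Matrix.charpoly A).roots, ‖β - α‖ ≤ ε * r := by
  by_contra hcon
  push_neg at hcon
  rcases Nat.eq_zero_or_pos r with rfl | hr
  · exact hv (Subsingleton.elim v 0)
  have hcard : Multiset.card (Matrix.charpoly A).roots = r := by
    have hsplit : (Matrix.charpoly A).Splits :=
      IsAlgClosed.splits (Matrix.charpoly A)
    rw [Polynomial.splits_iff_card_roots.mp hsplit, Matrix.charpoly_natDegree_eq_dim,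
      Fintype.card_fin]
  obtain ⟨β₁, hβ₁⟩ : ∃ β, β ∈ (Matrix.charpoly A).roots :=
    Multiset.card_pos_iff_exists_mem.mp (by rw [hcard]; exact hr)
  obtain ⟨β₀, hβ₀S, hβ₀min⟩ := Finset.exists_min_image
    ((Matrix.charpoly A).roots.toFinset) (fun β => ‖β - α‖)
    ⟨β₁, Multiset.mem_toFinset.mpr hβ₁⟩
  have hβ₀ : β₀ ∈ (Matrix.charpoly A).roots := Multiset.mem_toFinset.mp hβ₀S
  set m : ℝ := ‖β₀ - α‖ with hmdef
  have hmgt : ε * r < m := hcon β₀ hβ₀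
  have hεr : ε ≤ ε * r := by
    nlinarith [Nat.one_le_cast (α := ℝ) |>.mpr hr]
  have hm0 : 0 < m := lt_of_le_of_lt (by positivity) hmgt
  set B := A - α • (1 : Matrix (Fin r) (Fin r) ℂ) with hBdef
  have hspec : ∀ z ∈ spectrum ℂ B, (⟨m, hm0.le⟩ : ℝ≥0) ≤ ‖z‖₊ := by
    intro z hz
    have hz' : z ∈ spectrum ℂ A - ({α} : Set ℂ) := by
      rw [spectrum.sub_singleton_eq A α]
      have : A - (algebraMap ℂ (Matrix (Fin r) (Fin r) ℂ)) α = B := by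
        rw [hBdef, Algebra.algebraMap_eq_smul_one]
      rwa [this]
    obtain ⟨β, hβ, y, hy, rfl⟩ := hz'
    rcases Set.mem_singleton_iff.mp hy with rfl
    have hβroots : β ∈ (Matrix.charpoly A).roots := (aux_mem_roots_iff A β).mpr hβ
    have hle : m ≤ ‖β - y‖ := hβ₀min β (Multiset.mem_toFinset.mpr hβroots)
    change (m : ℝ) ≤ ((‖β - y‖₊ : ℝ≥0) : ℝ)
    simpa using hle
  have hBunit : IsUnit B := by
    by_contra hnu
    have h0 : (0 : ℂ) ∈ spectrum ℂ B := (spectrum.zero_mem_iff ℂ).mpr hnu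
    have := hspec 0 h0
    simp only [nnnorm_zero] at this
    exact absurd (le_antisymm (by exact_mod_cast this) (by positivity)) hm0.ne'
  obtain ⟨u, hu⟩ := hBunit
  have hNorm : star B * B = B * star B := aux_normal A hA α
  have hinv := aux_inv_norm B hNorm u hu ⟨m, hm0.le⟩ (by exact_mod_cast hm0) hspec
  have hinv' : ‖(↑u⁻¹ : Matrix (Fin r) (Fin r) ℂ)‖ ≤ m⁻¹ := by
    have := NNReal.coe_le_coe.mpr hinv
    exact this.trans_eq (NNReal.coe_inv ⟨m, hm0.le⟩)
  have hv0 : 0 < ‖v‖ := norm_pos_iff.mpr hv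
  have hmul : (↑u⁻¹ : Matrix (Fin r) (Fin r) ℂ) * B = 1 := by
    rw [← hu]; exact u.inv_mul
  set Ci := Matrix.toEuclideanCLM (𝕜 := ℂ) (↑u⁻¹ : Matrix (Fin r) (Fin r) ℂ) with hCi
  set CB := Matrix.toEuclideanCLM (𝕜 := ℂ) B with hCB
  have hfact : v = Ci (CB v) := by
    have h2 := congrArg (fun M => Matrix.toEuclideanCLM (𝕜 := ℂ) M v) hmul
    simpa [map_mul, hCi, hCB] using h2.symm
  have hCinorm : ‖Ci‖ ≤ m⁻¹ := hinv'
  have key : ‖v‖ ≤ m⁻¹ * (ε * ‖v‖) := by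
    calc ‖v‖ = ‖Ci (CB v)‖ := by rw [← hfact]
      _ ≤ ‖Ci‖ * ‖CB v‖ := ContinuousLinearMap.le_opNorm _ _
      _ ≤ m⁻¹ * (ε * ‖v‖) := mul_le_mul hCinorm h (norm_nonneg _) (by positivity)
  have hfin : m⁻¹ * (ε * ‖v‖) < ‖v‖ := by
    rw [inv_mul_lt_iff₀ hm0]
    have : ε < m := lt_of_le_of_lt hεr hmgt
    nlinarith
  exact absurd (lt_of_le_of_lt key hfin) (lt_irrefl _)
end
end

section
/- Let (X,d) be a metric space, let n ≥ 1 be an integer, let x_1, …, x_n ∈ X, let ε₀ > 0, and let L₁ > 8. Then there exist an integer N with 0 ≤ N ≤ n and a partition {1, …, n} = ⊔_{j∈Λ} S_j such that: (i) d(x_a, x_b) > (L₁ − 4)·(L₁·n)^N·ε₀ for all a ∈ S_j and b ∈ S_k with j ≠ k; and (ii) d(x_a, x_b) ≤ 4·(L₁·n)^N·ε₀ for all a, b lying in the same block S_j. -/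
open SimpleGraph

private lemma walk_dist_bound {n : ℕ} {X : Type*} [MetricSpace X] (x : Fin n → X) (r : ℝ)
    (G : SimpleGraph (Fin n)) (hG : ∀ a b, G.Adj a b → dist (x a) (x b) ≤ r)
    {a b : Fin n} (p : G.Walk a b) : dist (x a) (x b) ≤ p.length * r := by
  induction p with
  | nil => simp
  | @cons u v w h q ih =>
    have := dist_triangle (x u) (x v) (x w)
    have h1 := hG _ _ h
    rw [SimpleGraph.Walk.length_cons]
    push_cast
    nlinarith

/-- Decomposition of finite tuples in a metric space into well-separated clusters of controlled
diameter (Lemma 12.6.20.11 of the paper).  The partition is specified by a labeling function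
`c : Fin n → Λ`: points in different blocks are far apart, while points in the same block are
close. -/
theorem cluster_decomposition {X : Type*} [MetricSpace X] (n : ℕ) (hn : 1 ≤ n)
    (x : Fin n → X) (ε₀ : ℝ) (hε₀ : 0 < ε₀) (L₁ : ℝ) (hL₁ : 8 < L₁) :
    ∃ N : ℕ, N ≤ n ∧ ∃ (Λ : Type) (c : Fin n → Λ),
      (∀ a b : Fin n, c a ≠ c b →
        (L₁ - 4) * (L₁ * n) ^ N * ε₀ < dist (x a) (x b)) ∧
      (∀ a b : Fin n, c a = c b →
        dist (x a) (x b) ≤ 4 * (L₁ * n) ^ N * ε₀) := by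
  classical
  have hL0 : (0:ℝ) < L₁ := by linarith
  have hn0 : (0:ℝ) < (n:ℝ) := by exact_mod_cast hn
  set s : ℕ → ℝ := fun N => (L₁ * (n:ℝ)) ^ N * ε₀ with hs
  have hspos : ∀ N, 0 < s N := fun N =>
    mul_pos (pow_pos (mul_pos hL0 hn0) N) hε₀
  -- the graph at scale N
  let G : ℕ → SimpleGraph (Fin n) := fun N =>
    { Adj := fun a b => a ≠ b ∧ dist (x a) (x b) ≤ L₁ * s N
      symm := ⟨fun a b h => ⟨h.1.symm, le_of_eq_of_le (dist_comm (x b) (x a)) h.2⟩⟩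
      loopless := ⟨fun a h => h.1 rfl⟩ }
  have hmono : ∀ N, G N ≤ G (N + 1) := by
    intro N a b hab
    refine ⟨hab.1, hab.2.trans ?_⟩
    have : s N ≤ s (N + 1) := by
      simp only [hs]
      have h1 : (1:ℝ) ≤ L₁ * n := by
        have : (1:ℝ) ≤ (n:ℝ) := by exact_mod_cast hn
        nlinarith
      have h2 : (L₁ * (n:ℝ)) ^ N ≤ (L₁ * (n:ℝ)) ^ (N + 1) :=
        pow_le_pow_right₀ h1 (by omega)
      nlinarith
    nlinarith
  -- number of connected components
  let g : ℕ → ℕ := fun N => Nat.card (G N).ConnectedComponent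
  have hgdef : ∀ N, g N = Nat.card (G N).ConnectedComponent := fun _ => rfl
  have hg_surj : ∀ N, Function.Surjective ((G N).connectedComponentMk) := by
    intro N c
    exact c.exists_rep
  have hg_le : ∀ N, g N ≤ n := by
    intro N
    have h1 := Nat.card_le_card_of_surjective _ (hg_surj N)
    rw [hgdef]
    exact h1.trans (by simp)
  have hg_pos : ∀ N, 0 < g N := by
    intro N
    have : Nonempty (G N).ConnectedComponent := ⟨(G N).connectedComponentMk ⟨0, hn⟩⟩
    rw [hgdef]
    exact Nat.card_pos
  have hg_mono : ∀ N, g (N + 1) ≤ g N := by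
    intro N
    have hsurj : Function.Surjective
        (SimpleGraph.ConnectedComponent.map (SimpleGraph.Hom.ofLE (hmono N))) := by
      intro c
      obtain ⟨v, rfl⟩ := hg_surj (N + 1) c
      exact ⟨(G N).connectedComponentMk v, by simp⟩
    exact Nat.card_le_card_of_surjective _ hsurj
  -- find N < n with stable component count
  have hstab : ∃ N < n, g N = g (N + 1) := by
    by_contra hcon
    push_neg at hcon
    have hdec : ∀ N < n, g (N + 1) < g N := fun N hN =>
      lt_of_le_of_ne (hg_mono N) (fun h => hcon N hN h.symm)
    have key : ∀ k ≤ n, g k + k ≤ g 0 := by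
      intro k hk
      induction k with
      | zero => simp
      | succ m ih =>
        have h1 := ih (Nat.le_of_succ_le hk)
        have h2 := hdec m (Nat.lt_of_succ_le hk)
        omega
    have := key n le_rfl
    have := hg_le 0
    have := hg_pos n
    omega
  obtain ⟨N, hNn, hNeq⟩ := hstab
  -- the map on components is bijective
  have hbij : Function.Bijective
      (SimpleGraph.ConnectedComponent.map (SimpleGraph.Hom.ofLE (hmono N))) := by
    rw [Nat.bijective_iff_surjective_and_card]
    constructor
    · intro c
      obtain ⟨v, rfl⟩ := hg_surj (N + 1) c
      exact ⟨(G N).connectedComponentMk v, by simp⟩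
    · rw [← hgdef N, ← hgdef (N + 1)]; exact hNeq
  refine ⟨N + 1, hNn, (G N).ConnectedComponent, (G N).connectedComponentMk, ?_, ?_⟩
  · -- separation
    intro a b hab
    have hab' : (G (N + 1)).connectedComponentMk a ≠ (G (N + 1)).connectedComponentMk b := by
      intro h
      apply hab
      apply hbij.1
      simpa using h
    have hne : a ≠ b := fun h => hab (by rw [h])
    have hnadj : ¬ (G (N + 1)).Adj a b := fun h =>
      hab' (SimpleGraph.ConnectedComponent.connectedComponentMk_eq_of_adj h)
    have hdist : L₁ * s (N + 1) < dist (x a) (x b) := by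
      by_contra h
      push_neg at h
      exact hnadj ⟨hne, h⟩
    have hsp := hspos (N + 1)
    simp only [hs] at hdist hsp ⊢
    nlinarith
  · -- diameter
    intro a b hab
    have hreach : (G N).Reachable a b := SimpleGraph.ConnectedComponent.exact hab
    obtain ⟨w⟩ := hreach
    have hpath := w.toPath
    have hlen : (hpath : (G N).Walk a b).length < n := by
      have := hpath.2.length_lt
      simpa using this
    have hd := walk_dist_bound x (L₁ * s N) (G N) (fun a b h => h.2) (hpath : (G N).Walk a b)
    have hcast : ((hpath : (G N).Walk a b).length : ℝ) ≤ (n : ℝ) := by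
      exact_mod_cast hlen.le
    have hrpos : (0:ℝ) < L₁ * s N := mul_pos hL0 (hspos N)
    have hd2 : dist (x a) (x b) ≤ (n : ℝ) * (L₁ * s N) := by
      calc dist (x a) (x b) ≤ _ := hd
        _ ≤ (n : ℝ) * (L₁ * s N) := by nlinarith
    have hsN : s (N + 1) = L₁ * (n:ℝ) * s N := by
      simp only [hs, pow_succ]; ring
    have hsp := hspos (N + 1)
    simp only [hs] at hd2 hsN hsp ⊢
    nlinarith
end

section
/- For every C₀ > 0 there exists ε₁ > 0, depending only on C₀, with the following property. Let R > 0 and let g : {w ∈ ℂ : |w| > R} → ℝ be a C^∞ function with g ≥ 0 such that (∂_x² + ∂_y²) g ≥ 4·C₀·g on the region (equivalently −∂_w∂_{w̄} g ≤ −C₀·g), and suppose there exist K > 0 and N > 0 with g(w) ≤ K·|w|^N for all |w| > R. Then there exist R' ≥ R and K' > 0 such that g(w) ≤ K'·exp(−ε₁·|w|) for all |w| ≥ R'. -/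
noncomputable section

/-- Second derivative of `g : ℂ → ℝ` in the direction of the real axis:
`∂ₓ² g (w) = (d/ds)² g(w + s) |_{s=0}`. -/
def d2x (g : ℂ → ℝ) (w : ℂ) : ℝ := deriv (deriv fun s : ℝ => g (w + s)) 0

/-- Second derivative of `g : ℂ → ℝ` in the direction of the imaginary axis:
`∂_y² g (w) = (d/ds)² g(w + s i) |_{s=0}`. -/
def d2y (g : ℂ → ℝ) (w : ℂ) : ℝ := deriv (deriv fun s : ℝ => g (w + s * Complex.I)) 0

open Real Filter Metric Set Topology
set_option maxHeartbeats 1000000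

-- affine derivative helpers
lemma hasDerivAt_exp_aff (k α β s : ℝ) :
    HasDerivAt (fun s : ℝ => k * Real.exp (α + s * β)) (k * β * Real.exp (α + s * β)) s := by
  have ha : HasDerivAt (fun s : ℝ => α + s * β) β s := by
    simpa using ((hasDerivAt_id s).mul_const β).const_add α
  have h := ((Real.hasDerivAt_exp (α + s * β)).comp s ha).const_mul k
  exact h.congr_deriv (by ring)

lemma hasDerivAt_cosh_aff (k α β s : ℝ) :
    HasDerivAt (fun s : ℝ => k * Real.cosh (α + s * β)) (k * β * Real.sinh (α + s * β)) s := by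
  have ha : HasDerivAt (fun s : ℝ => α + s * β) β s := by
    simpa using ((hasDerivAt_id s).mul_const β).const_add α
  have h := ((Real.hasDerivAt_cosh (α + s * β)).comp s ha).const_mul k
  exact h.congr_deriv (by ring)

lemma hasDerivAt_sinh_aff (k α β s : ℝ) :
    HasDerivAt (fun s : ℝ => k * Real.sinh (α + s * β)) (k * β * Real.cosh (α + s * β)) s := by
  have ha : HasDerivAt (fun s : ℝ => α + s * β) β s := by
    simpa using ((hasDerivAt_id s).mul_const β).const_add α
  have h := ((Real.hasDerivAt_sinh (α + s * β)).comp s ha).const_mul k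
  exact h.congr_deriv (by ring)

/-- second derivative at 0 of `c + k₁ cosh(α₁+sβ₁) + k₂ cosh(α₂+sβ₂)`. -/
lemma deriv2_cosh2 (c k₁ α₁ β₁ k₂ α₂ β₂ : ℝ) :
    deriv (deriv fun s : ℝ =>
        c + k₁ * Real.cosh (α₁ + s * β₁) + k₂ * Real.cosh (α₂ + s * β₂)) 0
      = k₁ * β₁ ^ 2 * Real.cosh α₁ + k₂ * β₂ ^ 2 * Real.cosh α₂ := by
  have h1 : deriv (fun s : ℝ =>
      c + k₁ * Real.cosh (α₁ + s * β₁) + k₂ * Real.cosh (α₂ + s * β₂))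
      = fun s => k₁ * β₁ * Real.sinh (α₁ + s * β₁) + k₂ * β₂ * Real.sinh (α₂ + s * β₂) := by
    funext s
    exact (((hasDerivAt_cosh_aff k₁ α₁ β₁ s).const_add c).add
      (hasDerivAt_cosh_aff k₂ α₂ β₂ s)).deriv
  rw [h1]
  have h2 := ((hasDerivAt_sinh_aff (k₁ * β₁) α₁ β₁ 0).add
      (hasDerivAt_sinh_aff (k₂ * β₂) α₂ β₂ 0)).deriv
  refine h2.trans ?_; simp; ring

/-- second derivative at 0 of `k₁ exp(α₁+sβ₁) + k₂ exp(α₂+sβ₂) + k₃ cosh(α₃+sβ₃)`. -/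
lemma deriv2_exp2cosh (k₁ α₁ β₁ k₂ α₂ β₂ k₃ α₃ β₃ : ℝ) :
    deriv (deriv fun s : ℝ =>
        k₁ * Real.exp (α₁ + s * β₁) + k₂ * Real.exp (α₂ + s * β₂)
          + k₃ * Real.cosh (α₃ + s * β₃)) 0
      = k₁ * β₁ ^ 2 * Real.exp α₁ + k₂ * β₂ ^ 2 * Real.exp α₂ + k₃ * β₃ ^ 2 * Real.cosh α₃ := by
  have h1 : deriv (fun s : ℝ =>
      k₁ * Real.exp (α₁ + s * β₁) + k₂ * Real.exp (α₂ + s * β₂)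
        + k₃ * Real.cosh (α₃ + s * β₃))
      = fun s => k₁ * β₁ * Real.exp (α₁ + s * β₁) + k₂ * β₂ * Real.exp (α₂ + s * β₂)
        + k₃ * β₃ * Real.sinh (α₃ + s * β₃) := by
    funext s
    exact (((hasDerivAt_exp_aff k₁ α₁ β₁ s).add (hasDerivAt_exp_aff k₂ α₂ β₂ s)).add
      (hasDerivAt_cosh_aff k₃ α₃ β₃ s)).deriv
  rw [h1]
  have h2 := (((hasDerivAt_exp_aff (k₁ * β₁) α₁ β₁ 0).add
      (hasDerivAt_exp_aff (k₂ * β₂) α₂ β₂ 0)).add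
      (hasDerivAt_sinh_aff (k₃ * β₃) α₃ β₃ 0)).deriv
  refine h2.trans ?_; simp; ring

lemma half_exp_abs_le_cosh (t : ℝ) : Real.exp |t| / 2 ≤ Real.cosh t := by
  rw [Real.cosh_eq]
  rcases abs_cases t with ⟨h, _⟩ | ⟨h, _⟩ <;> rw [h] <;>
    nlinarith [Real.exp_pos t, Real.exp_pos (-t)]

/-- Second derivative test: at an interior local max of a smooth function, `f'' ≤ 0`. -/
lemma secondDeriv_nonpos_of_isLocalMax {f : ℝ → ℝ} {r : ℝ} (hr : 0 < r)
    (hf : ContDiffOn ℝ (⊤ : ℕ∞) f (ball (0 : ℝ) r)) (hmax : IsLocalMax f 0) :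
    deriv (deriv f) 0 ≤ 0 := by
  by_contra hpos
  push_neg at hpos
  have h0 : (0 : ℝ) ∈ ball (0 : ℝ) r := by simpa using hr
  have hball : IsOpen (ball (0 : ℝ) r) := isOpen_ball
  have hf' : ContDiffOn ℝ (⊤ : ℕ∞) (deriv f) (ball (0 : ℝ) r) :=
    hf.deriv_of_isOpen hball (by exact_mod_cast le_top)
  have hd0 : deriv f 0 = 0 := hmax.deriv_eq_zero
  have hD : HasDerivAt (deriv f) (deriv (deriv f) 0) 0 :=
    ((hf'.contDiffAt (hball.mem_nhds h0)).differentiableAt (by simp)).hasDerivAt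
  rw [hasDerivAt_iff_tendsto_slope] at hD
  have hev : ∀ᶠ x in 𝓝[≠] (0 : ℝ), 0 < slope (deriv f) 0 x :=
    hD.eventually (eventually_gt_nhds hpos)
  have hev' : ∀ᶠ x in 𝓝[>] (0 : ℝ), 0 < deriv f x := by
    have hmono : 𝓝[>] (0 : ℝ) ≤ 𝓝[≠] (0 : ℝ) :=
      nhdsWithin_mono 0 (fun x hx => ne_of_gt hx)
    filter_upwards [hev.filter_mono hmono, self_mem_nhdsWithin] with x hx hx'
    have hx0 : (0 : ℝ) < x := hx'
    rw [slope_def_field, hd0] at hx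
    have : 0 < deriv f x / x := by simpa using hx
    exact (div_pos_iff.mp this).resolve_right (fun h => absurd hx0 (not_lt.mpr h.2.le)) |>.1
  obtain ⟨t, ht, hsub⟩ := mem_nhdsGT_iff_exists_Ioo_subset.mp hev'
  obtain ⟨r', hr', hloc⟩ := Metric.eventually_nhds_iff_ball.mp hmax
  set τ := min (min t r') r / 2 with hτdef
  have hτpos : 0 < τ := by
    have := mem_Ioi.mp ht
    positivity
  have hτt : τ < t := by
    have h1 : τ ≤ t / 2 := by
      have : min (min t r') r ≤ t := le_trans (min_le_left _ _) (min_le_left _ _)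
      linarith
    have := mem_Ioi.mp ht
    linarith
  have hτr' : τ < r' := by
    have : min (min t r') r ≤ r' := le_trans (min_le_left _ _) (min_le_right _ _)
    linarith
  have hτr : τ < r := by
    have : min (min t r') r ≤ r := min_le_right _ _
    linarith
  have hIcc : Icc (0 : ℝ) τ ⊆ ball (0 : ℝ) r := by
    intro x hx
    simp only [mem_ball, Real.dist_eq, sub_zero]
    rw [abs_of_nonneg hx.1]
    exact lt_of_le_of_lt hx.2 hτr
  have hmono : StrictMonoOn f (Icc (0 : ℝ) τ) := by
    apply strictMonoOn_of_deriv_pos (convex_Icc _ _)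
    · exact hf.continuousOn.mono hIcc
    · intro x hx
      rw [interior_Icc] at hx
      exact hsub ⟨hx.1, lt_trans hx.2 hτt⟩
  have h1 : f 0 < f τ := hmono ⟨le_refl _, hτpos.le⟩ ⟨hτpos.le, le_refl _⟩ hτpos
  have h2 : f τ ≤ f 0 := by
    apply hloc
    simp only [mem_ball, Real.dist_eq, sub_zero]
    rw [abs_of_nonneg hτpos.le]
    exact hτr'
  linarith

/-- second derivative of a difference. -/
lemma deriv2_sub_of_contDiffOn {f b : ℝ → ℝ} {r : ℝ} (hr : 0 < r)
    (hf : ContDiffOn ℝ (⊤ : ℕ∞) f (ball (0 : ℝ) r)) (hb : ContDiff ℝ (⊤ : ℕ∞) b) :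
    deriv (deriv fun s => f s - b s) 0 = deriv (deriv f) 0 - deriv (deriv b) 0 := by
  have h0 : (0 : ℝ) ∈ ball (0 : ℝ) r := by simpa using hr
  have hball : IsOpen (ball (0 : ℝ) r) := isOpen_ball
  have hbd : Differentiable ℝ b := hb.differentiable (by simp)
  have hbd' : Differentiable ℝ (deriv b) :=
    ((contDiff_infty_iff_deriv.mp hb).2).differentiable (by simp)
  have hfd : ∀ x ∈ ball (0 : ℝ) r, DifferentiableAt ℝ f x := fun x hx =>
    (hf.contDiffAt (hball.mem_nhds hx)).differentiableAt (by simp)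
  have hf' : ContDiffOn ℝ (⊤ : ℕ∞) (deriv f) (ball (0 : ℝ) r) :=
    hf.deriv_of_isOpen hball (by exact_mod_cast le_top)
  have hfd' : DifferentiableAt ℝ (deriv f) 0 :=
    (hf'.contDiffAt (hball.mem_nhds h0)).differentiableAt (by simp)
  have heq : deriv (fun s => f s - b s) =ᶠ[𝓝 (0 : ℝ)] fun s => deriv f s - deriv b s := by
    filter_upwards [hball.mem_nhds h0] with x hx
    exact deriv_sub (hfd x hx) (hbd x)
  rw [heq.deriv_eq, deriv_fun_sub hfd' (hbd' 0)]


lemma slice_contDiffOn {g : ℂ → ℝ} {U : Set ℂ} (hU : IsOpen U)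
    (hg : ContDiffOn ℝ (⊤ : ℕ∞) g U) {p : ℂ} (hp : p ∈ U) :
    ∃ r > (0 : ℝ), ContDiffOn ℝ (⊤ : ℕ∞) (fun s : ℝ => g (p + s)) (ball (0 : ℝ) r)
      ∧ ContDiffOn ℝ (⊤ : ℕ∞) (fun s : ℝ => g (p + s * Complex.I)) (ball (0 : ℝ) r) := by
  obtain ⟨r, hr, hball⟩ := Metric.isOpen_iff.mp hU p hp
  refine ⟨r, hr, ?_, ?_⟩
  · have hmap : MapsTo (fun s : ℝ => p + (s : ℂ)) (ball (0 : ℝ) r) (ball p r) := by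
      intro s hs
      simp only [mem_ball, Real.dist_eq, sub_zero] at hs
      simp [Complex.dist_eq, hs]
    exact (hg.mono hball).comp
      ((contDiff_const.add Complex.ofRealCLM.contDiff).contDiffOn) hmap
  · have hmap : MapsTo (fun s : ℝ => p + (s : ℂ) * Complex.I) (ball (0 : ℝ) r) (ball p r) := by
      intro s hs
      simp only [mem_ball, Real.dist_eq, sub_zero] at hs
      simp [Complex.dist_eq, hs]
    exact (hg.mono hball).comp
      ((contDiff_const.add (Complex.ofRealCLM.contDiff.mul contDiff_const)).contDiffOn) hmap

/-- Maximum principle for the operator `Δ - 4C₀`. -/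
lemma maxPrinciple (C₀ : ℝ) (hC₀ : 0 < C₀) {U : Set ℂ} (hU : IsOpen U)
    {g b : ℂ → ℝ} (hg : ContDiffOn ℝ (⊤ : ℕ∞) g U) (hb : ContDiff ℝ (⊤ : ℕ∞) b)
    (hΔg : ∀ w ∈ U, 4 * C₀ * g w ≤ d2x g w + d2y g w)
    (hΔb : ∀ w ∈ U, d2x b w + d2y b w ≤ 4 * C₀ * b w)
    {D : Set ℂ} (hD : IsCompact D) (hDU : D ⊆ U)
    (hbd : ∀ w ∈ frontier D, g w ≤ b w) :
    ∀ w ∈ D, g w ≤ b w := by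
  intro w hw
  have hcont : ContinuousOn (fun u => g u - b u) D :=
    (hg.continuousOn.mono hDU).sub hb.continuous.continuousOn
  obtain ⟨p, hpD, hpmax⟩ := hD.exists_isMaxOn ⟨w, hw⟩ hcont
  have key : g p ≤ b p := by
    by_cases hfr : p ∈ frontier D
    · exact hbd p hfr
    · have hpi : p ∈ interior D := by
        rw [hD.isClosed.frontier_eq] at hfr
        simp only [mem_diff, not_and, not_not] at hfr
        exact hfr hpD
      have hpU : p ∈ U := hDU hpD
      obtain ⟨r, hr, hgx, hgy⟩ := slice_contDiffOn hU hg hpU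
      have hloc : IsLocalMax (fun u => g u - b u) p :=
        hpmax.isLocalMax (mem_interior_iff_mem_nhds.mp hpi)
      have hbx : ContDiff ℝ (⊤ : ℕ∞) (fun s : ℝ => b (p + s)) :=
        hb.comp (contDiff_const.add Complex.ofRealCLM.contDiff)
      have hby : ContDiff ℝ (⊤ : ℕ∞) (fun s : ℝ => b (p + s * Complex.I)) :=
        hb.comp (contDiff_const.add (Complex.ofRealCLM.contDiff.mul contDiff_const))
      -- x direction
      have hlocx : IsLocalMax (fun s : ℝ => g (p + s) - b (p + s)) 0 := by
        have hc : ContinuousAt (fun s : ℝ => p + (s : ℂ)) 0 :=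
          (continuous_const.add Complex.continuous_ofReal).continuousAt
        have h' : IsLocalMax (fun u => g u - b u) ((fun s : ℝ => p + (s : ℂ)) 0) := by
          simpa using hloc
        exact IsLocalMax.comp_continuous (g := fun s : ℝ => p + (s : ℂ)) (b := (0 : ℝ)) h' hc
      have h2x := secondDeriv_nonpos_of_isLocalMax hr
        ((hgx.sub hbx.contDiffOn) : ContDiffOn ℝ (⊤ : ℕ∞)
          (fun s : ℝ => g (p + s) - b (p + s)) (ball (0 : ℝ) r)) hlocx
      rw [deriv2_sub_of_contDiffOn hr hgx hbx] at h2x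
      -- y direction
      have hlocy : IsLocalMax (fun s : ℝ => g (p + s * Complex.I) - b (p + s * Complex.I)) 0 := by
        have hc : ContinuousAt (fun s : ℝ => p + (s : ℂ) * Complex.I) 0 :=
          (continuous_const.add (Complex.continuous_ofReal.mul continuous_const)).continuousAt
        have h' : IsLocalMax (fun u => g u - b u)
            ((fun s : ℝ => p + (s : ℂ) * Complex.I) 0) := by simpa using hloc
        exact IsLocalMax.comp_continuous
          (g := fun s : ℝ => p + (s : ℂ) * Complex.I) (b := (0 : ℝ)) h' hc
      have h2y := secondDeriv_nonpos_of_isLocalMax hr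
        ((hgy.sub hby.contDiffOn) : ContDiffOn ℝ (⊤ : ℕ∞)
          (fun s : ℝ => g (p + s * Complex.I) - b (p + s * Complex.I)) (ball (0 : ℝ) r)) hlocy
      rw [deriv2_sub_of_contDiffOn hr hgy hby] at h2y
      have hg' := hΔg p hpU
      have hb' := hΔb p hpU
      have : 4 * C₀ * g p ≤ 4 * C₀ * b p := by
        unfold d2x d2y at hg' hb'
        linarith
      nlinarith
  have := isMaxOn_iff.mp hpmax w hw
  linarith

def bar1 (M δ ε : ℝ) (v : ℂ) : ℝ :=
  M + δ * Real.cosh (ε * v.re) + δ * Real.cosh (ε * v.im)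

lemma contDiff_re' : ContDiff ℝ (⊤ : ℕ∞) (fun v : ℂ => v.re) := Complex.reCLM.contDiff
lemma contDiff_im' : ContDiff ℝ (⊤ : ℕ∞) (fun v : ℂ => v.im) := Complex.imCLM.contDiff

lemma contDiff_bar1 (M δ ε : ℝ) : ContDiff ℝ (⊤ : ℕ∞) (bar1 M δ ε) := by
  unfold bar1
  exact (contDiff_const.add (contDiff_const.mul
    (Real.contDiff_cosh.comp (contDiff_const.mul contDiff_re')))).add
    (contDiff_const.mul (Real.contDiff_cosh.comp (contDiff_const.mul contDiff_im')))

lemma d2x_bar1 (M δ ε : ℝ) (w : ℂ) :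
    d2x (bar1 M δ ε) w = δ * ε ^ 2 * Real.cosh (ε * w.re) := by
  have e : (fun s : ℝ => bar1 M δ ε (w + (s : ℂ)))
      = fun s : ℝ => M + δ * Real.cosh (ε * w.re + s * ε)
          + δ * Real.cosh (ε * w.im + s * 0) := by
    funext s
    simp only [bar1, Complex.add_re, Complex.add_im, Complex.ofReal_re, Complex.ofReal_im]
    ring_nf
  show deriv (deriv fun s : ℝ => bar1 M δ ε (w + (s : ℂ))) 0 = _
  rw [e, deriv2_cosh2]
  norm_num

lemma d2y_bar1 (M δ ε : ℝ) (w : ℂ) :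
    d2y (bar1 M δ ε) w = δ * ε ^ 2 * Real.cosh (ε * w.im) := by
  have e : (fun s : ℝ => bar1 M δ ε (w + (s : ℂ) * Complex.I))
      = fun s : ℝ => M + δ * Real.cosh (ε * w.re + s * 0)
          + δ * Real.cosh (ε * w.im + s * ε) := by
    funext s
    simp only [bar1, Complex.add_re, Complex.add_im, Complex.ofReal_re, Complex.ofReal_im,
      Complex.mul_re, Complex.mul_im, Complex.I_re, Complex.I_im]
    ring_nf
  show deriv (deriv fun s : ℝ => bar1 M δ ε (w + (s : ℂ) * Complex.I)) 0 = _
  rw [e, deriv2_cosh2]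
  norm_num

def bar2 (A δ ε : ℝ) (a : ℂ) (v : ℂ) : ℝ :=
  A * Real.exp (-ε * (v * (starRingEnd ℂ) a).re) + δ * Real.exp (ε * (v * (starRingEnd ℂ) a).re)
    + δ * Real.cosh (ε * (v * (starRingEnd ℂ) a).im)

lemma contDiff_bar2 (A δ ε : ℝ) (a : ℂ) : ContDiff ℝ (⊤ : ℕ∞) (bar2 A δ ε a) := by
  unfold bar2
  have hm : ContDiff ℝ (⊤ : ℕ∞) (fun v : ℂ => v * (starRingEnd ℂ) a) :=
    contDiff_id.mul contDiff_const
  exact ((contDiff_const.mul (Real.contDiff_exp.comp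
      (contDiff_const.mul (contDiff_re'.comp hm)))).add
    (contDiff_const.mul (Real.contDiff_exp.comp
      (contDiff_const.mul (contDiff_re'.comp hm))))).add
    (contDiff_const.mul (Real.contDiff_cosh.comp
      (contDiff_const.mul (contDiff_im'.comp hm))))

lemma d2x_bar2 (A δ ε : ℝ) (a w : ℂ) :
    d2x (bar2 A δ ε a) w
      = ε ^ 2 * a.re ^ 2 * (A * Real.exp (-ε * (w * (starRingEnd ℂ) a).re)
          + δ * Real.exp (ε * (w * (starRingEnd ℂ) a).re))
        + ε ^ 2 * a.im ^ 2 * (δ * Real.cosh (ε * (w * (starRingEnd ℂ) a).im)) := by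
  have e : (fun s : ℝ => bar2 A δ ε a (w + (s : ℂ)))
      = fun s : ℝ =>
          A * Real.exp (-ε * (w * (starRingEnd ℂ) a).re + s * (-ε * a.re))
            + δ * Real.exp (ε * (w * (starRingEnd ℂ) a).re + s * (ε * a.re))
            + δ * Real.cosh (ε * (w * (starRingEnd ℂ) a).im + s * (-ε * a.im)) := by
    funext s
    simp only [bar2, add_mul, Complex.add_re, Complex.add_im, Complex.mul_re, Complex.mul_im,
      Complex.conj_re, Complex.conj_im, Complex.ofReal_re, Complex.ofReal_im]
    ring_nf
  show deriv (deriv fun s : ℝ => bar2 A δ ε a (w + (s : ℂ))) 0 = _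
  rw [e, deriv2_exp2cosh]
  ring

lemma d2y_bar2 (A δ ε : ℝ) (a w : ℂ) :
    d2y (bar2 A δ ε a) w
      = ε ^ 2 * a.im ^ 2 * (A * Real.exp (-ε * (w * (starRingEnd ℂ) a).re)
          + δ * Real.exp (ε * (w * (starRingEnd ℂ) a).re))
        + ε ^ 2 * a.re ^ 2 * (δ * Real.cosh (ε * (w * (starRingEnd ℂ) a).im)) := by
  have e : (fun s : ℝ => bar2 A δ ε a (w + (s : ℂ) * Complex.I))
      = fun s : ℝ =>
          A * Real.exp (-ε * (w * (starRingEnd ℂ) a).re + s * (-ε * a.im))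
            + δ * Real.exp (ε * (w * (starRingEnd ℂ) a).re + s * (ε * a.im))
            + δ * Real.cosh (ε * (w * (starRingEnd ℂ) a).im + s * (ε * a.re)) := by
    funext s
    simp only [bar2, add_mul, Complex.add_re, Complex.add_im, Complex.mul_re, Complex.mul_im,
      Complex.conj_re, Complex.conj_im, Complex.ofReal_re, Complex.ofReal_im,
      Complex.I_re, Complex.I_im]
    ring_nf
  show deriv (deriv fun s : ℝ => bar2 A δ ε a (w + (s : ℂ) * Complex.I)) 0 = _
  rw [e, deriv2_exp2cosh]
  ring

lemma step1 (C₀ ε : ℝ) (hC₀ : 0 < C₀) (hε : 0 < ε) (hε2 : ε ^ 2 ≤ 4 * C₀)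
    (R : ℝ) (hR : 0 < R) (g : ℂ → ℝ)
    (hg : ContDiffOn ℝ (⊤ : ℕ∞) g {w : ℂ | R < ‖w‖})
    (hΔg : ∀ w : ℂ, R < ‖w‖ → 4 * C₀ * g w ≤ d2x g w + d2y g w)
    (K N : ℝ) (hK : 0 < K)
    (hpoly : ∀ w : ℂ, R < ‖w‖ → g w ≤ K * ‖w‖ ^ N) :
    ∀ u : ℂ, R + 1 ≤ ‖u‖ → g u ≤ K * (R + 1) ^ N + 1 := by
  intro u hu
  set R₁ := R + 1 with hR₁def
  have hR₁ : 0 < R₁ := by linarith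
  set M := K * R₁ ^ N with hMdef
  have hM : 0 < M := mul_pos hK (Real.rpow_pos_of_pos hR₁ N)
  have hU : IsOpen {w : ℂ | R < ‖w‖} :=
    isOpen_lt continuous_const continuous_norm
  rcases hu.eq_or_lt with heq | hlt
  · have h1 : R < ‖u‖ := by rw [← heq]; linarith
    have := hpoly u h1
    rw [← heq] at this
    linarith
  · -- pick a large outer radius ρ
    set H := Real.cosh (ε * u.re) + Real.cosh (ε * u.im) with hHdef
    have hH : 0 < H := by positivity
    have htend : Tendsto (fun ρ : ℝ => 2 * K * (ρ ^ N * Real.exp (-(ε / 2) * ρ)) * H)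
        atTop (𝓝 0) := by
      have h0 := tendsto_rpow_mul_exp_neg_mul_atTop_nhds_zero N (ε / 2) (by positivity)
      have := (h0.const_mul (2 * K)).mul_const H
      simpa using this
    have hlt1 : ∀ᶠ ρ : ℝ in atTop, 2 * K * (ρ ^ N * Real.exp (-(ε / 2) * ρ)) * H < 1 :=
      htend.eventually (eventually_lt_nhds one_pos)
    obtain ⟨ρ, hρsm, hρge⟩ :=
      (hlt1.and (eventually_ge_atTop (max (‖u‖) (R₁ + 1)))).exists
    have hρu : ‖u‖ ≤ ρ := le_trans (le_max_left _ _) hρge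
    have hρR₁ : R₁ + 1 ≤ ρ := le_trans (le_max_right _ _) hρge
    have hρpos : 0 < ρ := by linarith
    set δ := 2 * K * (ρ ^ N * Real.exp (-(ε / 2) * ρ)) with hδdef
    have hδ : 0 < δ := by positivity
    -- the comparison region
    set D : Set ℂ := {v : ℂ | R₁ ≤ ‖v‖ ∧ ‖v‖ ≤ ρ} with hDdef
    have hDclosed : IsClosed D :=
      IsClosed.inter (isClosed_le continuous_const continuous_norm)
        (isClosed_le continuous_norm continuous_const)
    have hDcomp : IsCompact D := by
      refine (isCompact_closedBall (0 : ℂ) ρ).of_isClosed_subset hDclosed (fun v hv => ?_)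
      simpa [mem_closedBall, Complex.dist_eq] using hv.2
    have hDU : D ⊆ {w : ℂ | R < ‖w‖} := fun v hv => by
      have := hv.1; simp only [mem_setOf_eq]; linarith
    -- the key product identity
    have hprod : δ * (Real.exp (ε * (ρ / 2)) / 2) = K * ρ ^ N := by
      have hexp : Real.exp (-(ε / 2) * ρ) * Real.exp (ε * (ρ / 2)) = 1 := by
        rw [← Real.exp_add, show -(ε / 2) * ρ + ε * (ρ / 2) = 0 by ring, Real.exp_zero]
      calc δ * (Real.exp (ε * (ρ / 2)) / 2)
          = K * ρ ^ N * (Real.exp (-(ε / 2) * ρ) * Real.exp (ε * (ρ / 2))) := by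
            rw [hδdef]; ring
        _ = K * ρ ^ N := by rw [hexp, mul_one]
    -- boundary estimate
    have hbd : ∀ v ∈ frontier D, g v ≤ bar1 M δ ε v := by
      intro v hv
      rw [hDclosed.frontier_eq] at hv
      obtain ⟨hvD, hvnotint⟩ := hv
      have hO : {v : ℂ | R₁ < ‖v‖ ∧ ‖v‖ < ρ} ⊆ interior D :=
        interior_maximal (fun x hx => ⟨hx.1.le, hx.2.le⟩)
          ((isOpen_lt continuous_const continuous_norm).inter
            (isOpen_lt continuous_norm continuous_const))
      have hcases : ‖v‖ = R₁ ∨ ‖v‖ = ρ := by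
        by_contra hcon
        push_neg at hcon
        exact hvnotint (hO ⟨lt_of_le_of_ne hvD.1 (Ne.symm hcon.1),
          lt_of_le_of_ne hvD.2 hcon.2⟩)
      have hRv : R < ‖v‖ := by have := hvD.1; linarith
      have hc1 : 0 < Real.cosh (ε * v.re) := Real.cosh_pos _
      have hc2 : 0 < Real.cosh (ε * v.im) := Real.cosh_pos _
      rcases hcases with hcase | hcase
      · have := hpoly v hRv
        rw [hcase] at this
        unfold bar1
        nlinarith [mul_pos hδ hc1, mul_pos hδ hc2]
      · have hgv : g v ≤ K * ρ ^ N := by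
          have := hpoly v hRv; rwa [hcase] at this
        have habs : ρ ≤ |v.re| + |v.im| := by
          rw [← hcase]; exact Complex.norm_le_abs_re_add_abs_im v
        have key : K * ρ ^ N ≤ δ * Real.cosh (ε * v.re) + δ * Real.cosh (ε * v.im) := by
          rcases le_or_gt (ρ / 2) |v.re| with hc | hc
          · have h1 : Real.exp (ε * (ρ / 2)) / 2 ≤ Real.cosh (ε * v.re) := by
              refine le_trans ?_ (half_exp_abs_le_cosh (ε * v.re))
              gcongr
              rw [abs_mul, abs_of_pos hε]
              exact mul_le_mul_of_nonneg_left hc hε.le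
            nlinarith [mul_le_mul_of_nonneg_left h1 hδ.le, mul_pos hδ hc2]
          · have him : ρ / 2 ≤ |v.im| := by linarith
            have h1 : Real.exp (ε * (ρ / 2)) / 2 ≤ Real.cosh (ε * v.im) := by
              refine le_trans ?_ (half_exp_abs_le_cosh (ε * v.im))
              gcongr
              rw [abs_mul, abs_of_pos hε]
              exact mul_le_mul_of_nonneg_left him hε.le
            nlinarith [mul_le_mul_of_nonneg_left h1 hδ.le, mul_pos hδ hc1]
        unfold bar1
        linarith
    -- Laplacian inequality for the barrier
    have hΔb : ∀ w ∈ {w : ℂ | R < ‖w‖},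
        d2x (bar1 M δ ε) w + d2y (bar1 M δ ε) w ≤ 4 * C₀ * bar1 M δ ε w := by
      intro w _
      rw [d2x_bar1, d2y_bar1]
      unfold bar1
      have h1 : 0 ≤ (4 * C₀ - ε ^ 2) * δ * Real.cosh (ε * w.re) :=
        mul_nonneg (mul_nonneg (by linarith) hδ.le) (Real.cosh_pos _).le
      have h2 : 0 ≤ (4 * C₀ - ε ^ 2) * δ * Real.cosh (ε * w.im) :=
        mul_nonneg (mul_nonneg (by linarith) hδ.le) (Real.cosh_pos _).le
      nlinarith [mul_pos (by linarith : (0:ℝ) < 4 * C₀) hM]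
    have hmain := maxPrinciple C₀ hC₀ hU hg (contDiff_bar1 M δ ε)
      (fun w hw => hΔg w hw) hΔb hDcomp hDU hbd u ⟨hu, hρu⟩
    have hfin : δ * Real.cosh (ε * u.re) + δ * Real.cosh (ε * u.im) < 1 := by
      have : δ * H < 1 := by
        rw [hδdef]; exact hρsm
      rw [hHdef] at this; linarith [this]; 
    unfold bar1 at hmain
    linarith

lemma step2 (C₀ ε : ℝ) (hC₀ : 0 < C₀) (hε : 0 < ε) (hε2 : ε ^ 2 ≤ 4 * C₀)
    (R : ℝ) (hR : 0 < R) (g : ℂ → ℝ)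
    (hg : ContDiffOn ℝ (⊤ : ℕ∞) g {w : ℂ | R < ‖w‖})
    (hΔg : ∀ w : ℂ, R < ‖w‖ → 4 * C₀ * g w ≤ d2x g w + d2y g w)
    (M' : ℝ) (hM' : 0 < M')
    (hbdd : ∀ u : ℂ, R + 1 ≤ ‖u‖ → g u ≤ M') :
    ∀ w : ℂ, R + 2 ≤ ‖w‖ →
      g w ≤ M' * Real.exp (ε * (R + 1)) * Real.exp (-ε * ‖w‖) := by
  intro w hw
  set R₁ := R + 1 with hR₁def
  have hR₁ : 0 < R₁ := by linarith
  set r := ‖w‖ with hrdef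
  have hr : R₁ + 1 ≤ r := by rw [hrdef]; linarith [hw]
  have hrpos : 0 < r := by linarith
  have hU : IsOpen {w : ℂ | R < ‖w‖} :=
    isOpen_lt continuous_const continuous_norm
  set a : ℂ := w / (r : ℂ) with hadef
  have haabs : ‖a‖ = 1 := by
    rw [hadef, norm_div, Complex.norm_real, Real.norm_eq_abs, abs_of_pos hrpos, ← hrdef, div_self hrpos.ne']
  have ha2 : a.re ^ 2 + a.im ^ 2 = 1 := by
    have h := Complex.sq_norm a
    rw [haabs, Complex.normSq_apply] at h
    rw [pow_two, pow_two]; nlinarith [h]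
  have hmul : w * (starRingEnd ℂ) a = ((Complex.normSq w : ℝ) : ℂ) / (r : ℂ) := by
    rw [hadef, map_div₀, Complex.conj_ofReal, ← mul_div_assoc, Complex.mul_conj]
  have hr2 : Complex.normSq w / r = r := by
    rw [Complex.normSq_eq_norm_sq, ← hrdef]
    field_simp
  have hTw : (w * (starRingEnd ℂ) a).re = r := by
    rw [hmul, ← Complex.ofReal_div, Complex.ofReal_re, hr2]
  have hSw : (w * (starRingEnd ℂ) a).im = 0 := by
    rw [hmul, ← Complex.ofReal_div, Complex.ofReal_im]
  set A := M' * Real.exp (ε * R₁) with hAdef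
  have hA : 0 < A := by positivity
  have hTle : ∀ v : ℂ, (v * (starRingEnd ℂ) a).re ≤ ‖v‖ := by
    intro v
    calc (v * (starRingEnd ℂ) a).re ≤ ‖v * (starRingEnd ℂ) a‖ :=
          Complex.re_le_norm _
      _ = ‖v‖ := by rw [norm_mul, Complex.norm_conj, haabs, mul_one]
  have hTcont : Continuous fun v : ℂ => (v * (starRingEnd ℂ) a).re :=
    Complex.continuous_re.comp (continuous_id.mul continuous_const)
  have hScont : Continuous fun v : ℂ => (v * (starRingEnd ℂ) a).im :=
    Complex.continuous_im.comp (continuous_id.mul continuous_const)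
  -- main estimate for each truncation radius ρ
  have claim : ∀ ρ : ℝ, r < ρ →
      g w ≤ A * Real.exp (-ε * r) + 2 * M' * Real.exp (-(ε * ρ)) * (Real.exp (ε * r) + 1) := by
    intro ρ hρ
    have hρpos : 0 < ρ := by linarith
    set δ := 2 * M' * Real.exp (-(ε * ρ)) with hδdef
    have hδ : 0 < δ := by positivity
    set D : Set ℂ := {v : ℂ | R₁ ≤ (v * (starRingEnd ℂ) a).re
      ∧ (v * (starRingEnd ℂ) a).re ≤ ρ ∧ |(v * (starRingEnd ℂ) a).im| ≤ ρ} with hDdef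
    have hDclosed : IsClosed D :=
      IsClosed.inter (isClosed_le continuous_const hTcont)
        (IsClosed.inter (isClosed_le hTcont continuous_const)
          (isClosed_le (_root_.continuous_abs.comp hScont) continuous_const))
    have hDcomp : IsCompact D := by
      refine (isCompact_closedBall (0 : ℂ) (2 * ρ)).of_isClosed_subset hDclosed
        (fun v hv => ?_)
      obtain ⟨h1, h2, h3⟩ := hv
      have habs : ‖v‖ = ‖v * (starRingEnd ℂ) a‖ := by
        rw [norm_mul, Complex.norm_conj, haabs, mul_one]
      have h4 : ‖v‖ ≤ |(v * (starRingEnd ℂ) a).re| + |(v * (starRingEnd ℂ) a).im| := by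
        rw [habs]; exact Complex.norm_le_abs_re_add_abs_im _
      have h5 : |(v * (starRingEnd ℂ) a).re| ≤ ρ := by
        rw [abs_of_nonneg (by linarith : (0:ℝ) ≤ (v * (starRingEnd ℂ) a).re)]; exact h2
      simp only [mem_closedBall, Complex.dist_eq, sub_zero]
      linarith
    have hDU : D ⊆ {w : ℂ | R < ‖w‖} := fun v hv => by
      have := le_trans hv.1 (hTle v)
      simp only [mem_setOf_eq]; linarith
    have hgleM' : ∀ v ∈ D, g v ≤ M' := fun v hv =>
      hbdd v (le_trans hv.1 (hTle v))
    -- boundary estimate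
    have hbd : ∀ v ∈ frontier D, g v ≤ bar2 A δ ε a v := by
      intro v hv
      rw [hDclosed.frontier_eq] at hv
      obtain ⟨hvD, hvnotint⟩ := hv
      have hO : {v : ℂ | R₁ < (v * (starRingEnd ℂ) a).re
          ∧ (v * (starRingEnd ℂ) a).re < ρ ∧ |(v * (starRingEnd ℂ) a).im| < ρ}
          ⊆ interior D :=
        interior_maximal (fun x hx => ⟨hx.1.le, hx.2.1.le, hx.2.2.le⟩)
          ((isOpen_lt continuous_const hTcont).inter
            ((isOpen_lt hTcont continuous_const).inter
              (isOpen_lt (_root_.continuous_abs.comp hScont) continuous_const)))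
      obtain ⟨h1, h2, h3⟩ := hvD
      have hcases : (v * (starRingEnd ℂ) a).re = R₁ ∨ (v * (starRingEnd ℂ) a).re = ρ
          ∨ |(v * (starRingEnd ℂ) a).im| = ρ := by
        by_contra hcon
        push_neg at hcon
        exact hvnotint (hO ⟨lt_of_le_of_ne h1 (Ne.symm hcon.1),
          lt_of_le_of_ne h2 hcon.2.1, lt_of_le_of_ne h3 hcon.2.2⟩)
      have hgv : g v ≤ M' := hgleM' v ⟨h1, h2, h3⟩
      have hX : 0 < A * Real.exp (-ε * (v * (starRingEnd ℂ) a).re) := by positivity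
      have hY : 0 < δ * Real.exp (ε * (v * (starRingEnd ℂ) a).re) := by positivity
      have hZ : 0 < δ * Real.cosh (ε * (v * (starRingEnd ℂ) a).im) :=
        mul_pos hδ (Real.cosh_pos _)
      unfold bar2
      rcases hcases with hcase | hcase | hcase
      · have hXval : A * Real.exp (-ε * (v * (starRingEnd ℂ) a).re) = M' := by
          rw [hcase, hAdef, mul_assoc, ← Real.exp_add,
            show ε * R₁ + -ε * R₁ = 0 by ring, Real.exp_zero, mul_one]
        linarith
      · have hYval : δ * Real.exp (ε * (v * (starRingEnd ℂ) a).re) = 2 * M' := by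
          rw [hcase, hδdef, mul_assoc, ← Real.exp_add,
            show -(ε * ρ) + ε * ρ = 0 by ring, Real.exp_zero, mul_one]
        linarith
      · have hcosh : Real.exp (ε * ρ) / 2 ≤ Real.cosh (ε * (v * (starRingEnd ℂ) a).im) := by
          refine le_trans ?_ (half_exp_abs_le_cosh _)
          gcongr
          rw [abs_mul, abs_of_pos hε, hcase]
        have hZval : M' ≤ δ * Real.cosh (ε * (v * (starRingEnd ℂ) a).im) := by
          have h6 : δ * (Real.exp (ε * ρ) / 2) = M' := by
            rw [hδdef]
            rw [show 2 * M' * Real.exp (-(ε * ρ)) * (Real.exp (ε * ρ) / 2)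
              = M' * (Real.exp (-(ε * ρ)) * Real.exp (ε * ρ)) by ring, ← Real.exp_add,
              show -(ε * ρ) + ε * ρ = 0 by ring, Real.exp_zero, mul_one]
          calc M' = δ * (Real.exp (ε * ρ) / 2) := h6.symm
            _ ≤ _ := mul_le_mul_of_nonneg_left hcosh hδ.le
        linarith
    -- Laplacian inequality for the barrier
    have hΔb : ∀ v ∈ {w : ℂ | R < ‖w‖},
        d2x (bar2 A δ ε a) v + d2y (bar2 A δ ε a) v ≤ 4 * C₀ * bar2 A δ ε a v := by
      intro v _
      rw [d2x_bar2, d2y_bar2]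
      unfold bar2
      set X := A * Real.exp (-ε * (v * (starRingEnd ℂ) a).re) with hXdef
      set Y := δ * Real.exp (ε * (v * (starRingEnd ℂ) a).re) with hYdef
      set Z := δ * Real.cosh (ε * (v * (starRingEnd ℂ) a).im) with hZdef
      have hX : 0 < X := by rw [hXdef]; positivity
      have hY : 0 < Y := by rw [hYdef]; positivity
      have hZ : 0 < Z := by rw [hZdef]; exact mul_pos hδ (Real.cosh_pos _)
      have heq : ε ^ 2 * a.re ^ 2 * (X + Y) + ε ^ 2 * a.im ^ 2 * Z
          + (ε ^ 2 * a.im ^ 2 * (X + Y) + ε ^ 2 * a.re ^ 2 * Z) = ε ^ 2 * (X + Y + Z) := by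
        linear_combination (ε ^ 2 * (X + Y + Z)) * ha2
      rw [heq]
      nlinarith [hX, hY, hZ]
    -- w belongs to the region
    have hwD : w ∈ D := by
      refine ⟨?_, ?_, ?_⟩
      · rw [hTw]; linarith
      · rw [hTw]; linarith
      · rw [hSw]; simp; linarith
    have hmain := maxPrinciple C₀ hC₀ hU hg (contDiff_bar2 A δ ε a)
      (fun v hv => hΔg v hv) hΔb hDcomp hDU hbd w hwD
    unfold bar2 at hmain
    rw [hTw, hSw, mul_zero, Real.cosh_zero, mul_one] at hmain
    linarith
  -- let the truncation radius go to infinity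
  have hlim : Tendsto (fun ρ : ℝ => 2 * M' * Real.exp (-(ε * ρ)) * (Real.exp (ε * r) + 1))
      atTop (𝓝 0) := by
    have hc : Tendsto (fun ρ : ℝ => ε * ρ) atTop atTop :=
      Tendsto.const_mul_atTop hε tendsto_id
    have h0 : Tendsto (fun ρ : ℝ => Real.exp (-(ε * ρ))) atTop (𝓝 0) :=
      Real.tendsto_exp_neg_atTop_nhds_zero.comp hc
    have := (h0.const_mul (2 * M')).mul_const (Real.exp (ε * r) + 1)
    simpa using this
  have hfin : g w ≤ A * Real.exp (-ε * r) := by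
    apply le_of_forall_pos_le_add
    intro η hη
    obtain ⟨ρ, hρ1, hρ2⟩ :=
      ((hlim.eventually (eventually_lt_nhds hη)).and (eventually_gt_atTop r)).exists
    have := claim ρ hρ2
    linarith
  exact hfin


/-- Ahlfors-type lemma (Lemma 17.10.7.300 of the paper): a nonnegative smooth function of
polynomial growth on a neighbourhood of infinity in `ℂ` satisfying
`−∂_w ∂_w̄ g ≤ −C₀ g` (equivalently `(∂ₓ² + ∂_y²) g ≥ 4 C₀ g`) decays exponentially. -/
theorem ahlfors_exponential_decay (C₀ : ℝ) (hC₀ : 0 < C₀) :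
    ∃ ε₁ > (0 : ℝ),
      ∀ R : ℝ, 0 < R → ∀ g : ℂ → ℝ,
        ContDiffOn ℝ (⊤ : ℕ∞) g {w : ℂ | R < ‖w‖} →
        (∀ w : ℂ, R < ‖w‖ → 0 ≤ g w) →
        (∀ w : ℂ, R < ‖w‖ → 4 * C₀ * g w ≤ d2x g w + d2y g w) →
        (∃ K > (0 : ℝ), ∃ N > (0 : ℝ), ∀ w : ℂ, R < ‖w‖ →
          g w ≤ K * ‖w‖ ^ N) →
        ∃ R' ≥ R, ∃ K' > (0 : ℝ), ∀ w : ℂ, R' ≤ ‖w‖ →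
          g w ≤ K' * Real.exp (-ε₁ * ‖w‖) := by
  set ε := min 1 (Real.sqrt C₀) with hεdef
  have hε : 0 < ε := lt_min one_pos (Real.sqrt_pos.mpr hC₀)
  have hε2 : ε ^ 2 ≤ 4 * C₀ := by
    have h1 : ε ≤ Real.sqrt C₀ := min_le_right _ _
    nlinarith [Real.sq_sqrt hC₀.le, hε.le]
  refine ⟨ε, hε, ?_⟩
  intro R hR g hg _ hΔg hpoly
  obtain ⟨K, hK, N, hN, hpoly⟩ := hpoly
  have hb := step1 C₀ ε hC₀ hε hε2 R hR g hg hΔg K N hK hpoly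
  have hMpos : 0 < K * (R + 1) ^ N + 1 := by
    have := Real.rpow_pos_of_pos (by linarith : (0:ℝ) < R + 1) N
    nlinarith
  have hs2 := step2 C₀ ε hC₀ hε hε2 R hR g hg hΔg (K * (R + 1) ^ N + 1) hMpos hb
  exact ⟨R + 2, by linarith, (K * (R + 1) ^ N + 1) * Real.exp (ε * (R + 1)), by positivity, hs2⟩
end
end

section
/- Let R > 0, c > 0, N > 0 and K > 0. Let g : {w ∈ ℂ : |w| > R} → ℝ be a C^∞ function with g ≥ 0 such that: (i) g(w) ≤ K·|w|^N for all |w| > R; and (ii) for every k > 0 there exists b_k > 0 with −∂_w∂_{w̄} g ≤ b_k·|w|^{−k} + (−c + |w|^{−2})·g on {|w| > R}. Then for every k > 0 there exist R_k ≥ R and K_k > 0 such that g(w) ≤ K_k·|w|^{−k} for all |w| ≥ R_k. -/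
noncomputable section

section Helpers
open Filter Topology

def HasD2At (f : ℝ → ℝ) (m : ℝ) : Prop :=
  ∃ f' : ℝ → ℝ, (∀ᶠ s in nhds (0:ℝ), HasDerivAt f (f' s) s) ∧ HasDerivAt f' m 0

theorem hasD2At_of_contDiffAt {f : ℝ → ℝ} (h : ContDiffAt ℝ 2 f 0) :
    HasD2At f (deriv (deriv f) 0) := by
  obtain ⟨u, hu, hcd⟩ := h.contDiffOn (le_refl 2) (by simp)
  have h0 : (0:ℝ) ∈ interior u := mem_interior_iff_mem_nhds.2 hu
  have hcd' : ContDiffOn ℝ 2 f (interior u) := hcd.mono interior_subset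
  refine ⟨deriv f, ?_, ?_⟩
  · filter_upwards [isOpen_interior.mem_nhds h0] with s hs
    exact ((hcd'.differentiableOn (by norm_num)).differentiableAt
      (isOpen_interior.mem_nhds hs)).hasDerivAt
  · have : ContDiffOn ℝ 1 (deriv f) (interior u) :=
      hcd'.deriv_of_isOpen isOpen_interior (by norm_num)
    exact ((this.differentiableOn (by norm_num)).differentiableAt
      (isOpen_interior.mem_nhds h0)).hasDerivAt

/-- second derivative of `s ↦ ((x+s)^2 + y^2)^(a/2)` at `0`. -/
theorem quad_rpow_hasD2At (x y a : ℝ) (h : 0 < x^2 + y^2) :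
    HasD2At (fun s => ((x+s)^2 + y^2) ^ (a/2))
      (a * (x^2+y^2)^(a/2-1) + a*(a-2)*x^2*(x^2+y^2)^(a/2-2)) := by
  have hq : ∀ s : ℝ, HasDerivAt (fun s => (x+s)^2 + y^2) (2*(x+s)) s := by
    intro s
    have h1 : HasDerivAt (fun s : ℝ => x + s) 1 s := (hasDerivAt_id s).const_add x
    have := (h1.pow 2).add_const (y^2)
    exact this.congr_deriv (by norm_num)
  have hev : ∀ᶠ s in nhds (0:ℝ), (x+s)^2 + y^2 ≠ 0 := by
    have : ContinuousAt (fun s => (x+s)^2 + y^2) 0 := (hq 0).continuousAt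
    have := this.eventually_ne (by simpa using h.ne')
    simpa using this
  refine ⟨fun s => a * ((x+s) * ((x+s)^2+y^2) ^ (a/2-1)), ?_, ?_⟩
  · filter_upwards [hev] with s hs
    have h2 := (hq s).rpow_const (p := a/2) (Or.inl hs)
    convert h2 using 1
    ring
  · have h1 : HasDerivAt (fun s : ℝ => x + s) 1 0 := (hasDerivAt_id 0).const_add x
    have h2 := (hq 0).rpow_const (p := a/2 - 1) (Or.inl (by simpa using h.ne'))
    have h3 := (h1.mul h2).const_mul a
    refine h3.congr_deriv ?_
    have e1 : a/2 - 1 - 1 = a/2 - 2 := by ring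
    simp only [add_zero] at *
    rw [← e1]
    ring

theorem abs_rpow_hasD2At (w : ℂ) (hw : w ≠ 0) (a : ℝ) :
    ∃ mx my : ℝ, HasD2At (fun s : ℝ => ‖w + s‖ ^ a) mx ∧
      HasD2At (fun s : ℝ => ‖w + s * Complex.I‖ ^ a) my ∧
      mx + my = a^2 * ‖w‖ ^ (a - 2) := by
  set Q := w.re^2 + w.im^2 with hQdef
  have hQ : 0 < Q := by
    have := Complex.normSq_pos.2 hw
    rw [Complex.normSq_apply] at this
    rw [hQdef]; nlinarith
  have key : ∀ z : ℂ, (fun s : ℝ => ‖z‖ ^ a) = fun s : ℝ => ‖z‖ ^ a := fun _ => rfl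
  have ex : (fun s : ℝ => ‖w + s‖ ^ a) = fun s => ((w.re + s)^2 + w.im^2) ^ (a/2) := by
    funext s
    rw [Complex.norm_def, Complex.normSq_apply]
    simp only [Complex.add_re, Complex.add_im, Complex.ofReal_re, Complex.ofReal_im, add_zero]
    rw [show (w.re+s)*(w.re+s)+w.im*w.im = (w.re+s)^2+w.im^2 by ring, Real.sqrt_eq_rpow,
      ← Real.rpow_mul (by positivity), show 1/2*a = a/2 by ring]
  have ey : (fun s : ℝ => ‖w + s * Complex.I‖ ^ a)
      = fun s => ((w.im + s)^2 + w.re^2) ^ (a/2) := by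
    funext s
    rw [Complex.norm_def, Complex.normSq_apply]
    simp only [Complex.add_re, Complex.add_im, Complex.mul_re, Complex.mul_im,
      Complex.I_re, Complex.I_im, Complex.ofReal_re, Complex.ofReal_im]
    rw [show (w.re+(s*0-0*1))*(w.re+(s*0-0*1))+(w.im+(s*1+0*0))*(w.im+(s*1+0*0))
       = (w.im+s)^2+w.re^2 by ring, Real.sqrt_eq_rpow,
      ← Real.rpow_mul (by positivity), show 1/2*a = a/2 by ring]
  have habs : ‖w‖ ^ (a-2) = Q ^ (a/2 - 1) := by
    rw [Complex.norm_def, Complex.normSq_apply,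
      show w.re*w.re+w.im*w.im = Q by rw [hQdef]; ring, Real.sqrt_eq_rpow,
      ← Real.rpow_mul hQ.le, show 1/2*(a-2) = a/2-1 by ring]
  refine ⟨_, _, ex ▸ quad_rpow_hasD2At w.re w.im a hQ,
    ey ▸ quad_rpow_hasD2At w.im w.re a (by nlinarith [hQ]), ?_⟩
  rw [habs]
  have hcomm : w.im^2 + w.re^2 = Q := by rw [hQdef]; ring
  rw [hcomm]
  have h1 : Q ^ (a/2-1) = Q ^ (a/2-2) * Q := by
    rw [← Real.rpow_add_one hQ.ne' (a/2-2), show a/2-2+1 = a/2-1 by ring]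
  rw [h1]; ring

theorem HasD2At.deriv2 {f : ℝ → ℝ} {m : ℝ} (h : HasD2At f m) :
    deriv (deriv f) 0 = m := by
  obtain ⟨f', hf', hm⟩ := h
  have he : deriv f =ᶠ[nhds (0:ℝ)] f' := hf'.mono fun s hs => hs.deriv
  rw [he.deriv_eq]
  exact hm.deriv

theorem HasD2At.sub {f h : ℝ → ℝ} {m n : ℝ} (hf : HasD2At f m) (hh : HasD2At h n) :
    HasD2At (fun s => f s - h s) (m - n) := by
  obtain ⟨f', hf', hmf⟩ := hf
  obtain ⟨h', hh', hmh⟩ := hh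
  exact ⟨fun s => f' s - h' s, (hf'.and hh').mono fun s ⟨a, b⟩ => a.sub b, hmf.sub hmh⟩

theorem HasD2At.const_mul {f : ℝ → ℝ} {m : ℝ} (a : ℝ) (hf : HasD2At f m) :
    HasD2At (fun s => a * f s) (a * m) := by
  obtain ⟨f', hf', hmf⟩ := hf
  exact ⟨fun s => a * f' s, hf'.mono fun s hs => hs.const_mul a, hmf.const_mul a⟩

/-- Second derivative test: at a local max, the second derivative is nonpositive. -/
theorem HasD2At.nonpos_of_isLocalMax {f : ℝ → ℝ} {m : ℝ} (h : HasD2At f m)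
    (hmax : IsLocalMax f 0) : m ≤ 0 := by
  obtain ⟨f', hf', hm⟩ := h
  by_contra hpos
  push_neg at hpos
  have hf'0 : f' 0 = 0 := by
    have := (hf'.self_of_nhds).deriv
    rw [← this]; exact hmax.deriv_eq_zero
  -- eventually f' s > 0 for s > 0 small
  have hslope : Tendsto (slope f' 0) (nhdsWithin 0 {(0:ℝ)}ᶜ) (nhds m) :=
    hasDerivAt_iff_tendsto_slope.1 hm
  have hev : ∀ᶠ s in nhdsWithin (0:ℝ) (Set.Ioi 0), 0 < f' s := by
    have h1 : ∀ᶠ s in nhdsWithin (0:ℝ) {(0:ℝ)}ᶜ, 0 < slope f' 0 s :=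
      hslope.eventually (eventually_gt_nhds hpos)
    have h2 : nhdsWithin (0:ℝ) (Set.Ioi 0) ≤ nhdsWithin (0:ℝ) {(0:ℝ)}ᶜ :=
      nhdsWithin_mono 0 (fun s hs => ne_of_gt hs)
    filter_upwards [h2 h1, self_mem_nhdsWithin] with s hs hs'
    rw [slope_def_field, hf'0, sub_zero, sub_zero, div_pos_iff] at hs
    rcases hs with ⟨h1, h2⟩ | ⟨h1, h2⟩
    · exact h1
    · exact absurd hs' (by simpa using h2.le)
  -- get δ > 0 with good properties on [0, δ]
  rw [eventually_nhdsWithin_iff] at hev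
  obtain ⟨δ1, hδ1, hδ1'⟩ := Metric.eventually_nhds_iff.1 hev
  obtain ⟨δ2, hδ2, hδ2'⟩ := Metric.eventually_nhds_iff.1 hf'
  obtain ⟨δ3, hδ3, hδ3'⟩ := Metric.eventually_nhds_iff.1 hmax
  set δ := min δ1 (min δ2 δ3) / 2 with hδdef
  have hδpos : 0 < δ := by positivity
  have hmem : ∀ s ∈ Set.Icc (0:ℝ) δ, dist s (0:ℝ) < min δ1 (min δ2 δ3) := by
    intro s hs
    rw [Real.dist_eq, sub_zero, abs_of_nonneg hs.1]
    calc s ≤ δ := hs.2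
    _ < min δ1 (min δ2 δ3) := by
      rw [hδdef]; exact half_lt_self (by positivity)
  have hmono : StrictMonoOn f (Set.Icc 0 δ) := by
    apply strictMonoOn_of_hasDerivWithinAt_pos (convex_Icc 0 δ) (f' := f')
    · intro s hs
      exact (hδ2' (lt_of_lt_of_le (hmem s hs) (le_trans (min_le_right _ _) (min_le_left _ _)))).continuousAt.continuousWithinAt
    · intro s hs
      rw [interior_Icc] at hs
      exact (hδ2' (lt_of_lt_of_le (hmem s ⟨hs.1.le, hs.2.le⟩) (le_trans (min_le_right _ _) (min_le_left _ _)))).hasDerivWithinAt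
    · intro s hs
      rw [interior_Icc] at hs
      exact hδ1' (lt_of_lt_of_le (hmem s ⟨hs.1.le, hs.2.le⟩) (min_le_left _ _)) hs.1
  have : f 0 < f δ := hmono ⟨le_rfl, hδpos.le⟩ ⟨hδpos.le, le_rfl⟩ hδpos
  have : f δ ≤ f 0 := hδ3'
    (lt_of_lt_of_le (hmem δ ⟨hδpos.le, le_rfl⟩) (le_trans (min_le_right _ _) (min_le_right _ _)))
  linarith

end Helpers

section Main
open Filter Topology

set_option maxHeartbeats 1000000 in
/-- Variant of the Ahlfors-type estimate giving rapid decay (Lemma 17.10.25.50 of the paper).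
Here `−∂_w ∂_w̄ g = −(1/4)(∂ₓ² + ∂_y²) g`. -/
theorem ahlfors_rapid_decay (R c N K : ℝ) (hR : 0 < R) (hc : 0 < c) (hN : 0 < N) (hK : 0 < K)
    (g : ℂ → ℝ)
    (hsm : ContDiffOn ℝ (⊤ : ℕ∞) g {w : ℂ | R < ‖w‖})
    (hnonneg : ∀ w : ℂ, R < ‖w‖ → 0 ≤ g w)
    (hgrowth : ∀ w : ℂ, R < ‖w‖ → g w ≤ K * ‖w‖ ^ N)
    (hineq : ∀ k : ℝ, 0 < k → ∃ b > (0 : ℝ), ∀ w : ℂ, R < ‖w‖ →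
      -(1 / 4) * (d2x g w + d2y g w) ≤
        b * ‖w‖ ^ (-k) + (-c + ‖w‖ ^ (-(2 : ℝ))) * g w) :
    ∀ k : ℝ, 0 < k → ∃ Rk ≥ R, ∃ Kk > (0 : ℝ), ∀ w : ℂ, Rk ≤ ‖w‖ →
      g w ≤ Kk * ‖w‖ ^ (-k) := by
  intro k hk
  obtain ⟨b, hb, hbineq⟩ := hineq k hk
  have hsc : 0 < Real.sqrt c := Real.sqrt_pos.2 hc
  set R₁ : ℝ := max R ((k+N+3)/Real.sqrt c) + 1 with hR₁def
  have hRR₁ : R < R₁ := lt_of_le_of_lt (le_max_left _ _) (lt_add_one _)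
  have hR₁pos : 0 < R₁ := hR.trans hRR₁
  have hR₁sqrt : k + N + 3 ≤ R₁ * Real.sqrt c := by
    have h1 : (k+N+3)/Real.sqrt c ≤ R₁ := by
      rw [hR₁def]
      have := le_max_right R ((k+N+3)/Real.sqrt c)
      linarith
    calc k + N + 3 = ((k+N+3)/Real.sqrt c) * Real.sqrt c := by field_simp
    _ ≤ R₁ * Real.sqrt c := mul_le_mul_of_nonneg_right h1 hsc.le
  -- facts about r ≥ R₁
  have hr_facts : ∀ r : ℝ, R₁ ≤ r → 0 < r ∧
      r ^ (-(2:ℝ)) * k^2 ≤ c ∧ r ^ (-(2:ℝ)) * (N+1)^2 ≤ c ∧ r ^ (-(2:ℝ)) ≤ c/4 := by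
    intro r hr
    have hrpos : 0 < r := hR₁pos.trans_le hr
    have hrc : k + N + 3 ≤ r * Real.sqrt c :=
      hR₁sqrt.trans (mul_le_mul_of_nonneg_right hr hsc.le)
    have hsq : (k+N+3)^2 ≤ r^2 * c := by
      have h2 := pow_le_pow_left₀ (by positivity) hrc 2
      rw [mul_pow, Real.sq_sqrt hc.le] at h2
      exact h2
    have hu : r ^ (-(2:ℝ)) * r^2 = 1 := by
      rw [show (-(2:ℝ)) = -((2:ℕ):ℝ) by norm_num, Real.rpow_neg hrpos.le,
        Real.rpow_natCast]
      field_simp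
    have hupos : 0 < r ^ (-(2:ℝ)) := Real.rpow_pos_of_pos hrpos _
    refine ⟨hrpos, ?_, ?_, ?_⟩
    · have hle : k^2 ≤ r^2 * c := by nlinarith
      have hc' : r ^ (-(2:ℝ)) * r^2 * c = c := by rw [hu, one_mul]
      linarith [mul_nonneg hupos.le (sub_nonneg.2 hle), hc']
    · have hle : (N+1)^2 ≤ r^2 * c := by nlinarith
      have hc' : r ^ (-(2:ℝ)) * r^2 * c = c := by rw [hu, one_mul]
      linarith [mul_nonneg hupos.le (sub_nonneg.2 hle), hc']
    · have hle : (4:ℝ) ≤ r^2 * c := by nlinarith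
      have hc' : r ^ (-(2:ℝ)) * r^2 * c = c := by rw [hu, one_mul]
      linarith [mul_nonneg hupos.le (sub_nonneg.2 hle), hc']
  set M : ℝ := max (2*b/c) (K * R₁ ^ (N+k)) with hMdef
  have hM1 : 2*b/c ≤ M := le_max_left _ _
  have hM2 : K * R₁ ^ (N+k) ≤ M := le_max_right _ _
  have hMpos : 0 < M := lt_of_lt_of_le (by positivity) hM1
  have hb2 : b ≤ c*M/2 := by
    have := (div_le_iff₀ hc).mp hM1
    linarith
  have hUopen : IsOpen {z : ℂ | R < ‖z‖} :=
    isOpen_lt continuous_const continuous_norm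
  refine ⟨R₁, hRR₁.le, M, hMpos, ?_⟩
  intro w hw
  have hrw : 0 < ‖w‖ := hR₁pos.trans_le hw
  -- key estimate with ε-room
  have key : ∀ ε : ℝ, 0 < ε →
      g w ≤ M * ‖w‖ ^ (-k) + ε * ‖w‖ ^ (N+1) := by
    intro ε hε
    set S : ℝ := max (K/ε) (‖w‖) with hSdef
    have hwS : ‖w‖ ≤ S := le_max_right _ _
    have hKS : K/ε ≤ S := le_max_left _ _
    have hS1 : R₁ ≤ S := hw.trans hwS
    have hSpos : 0 < S := hR₁pos.trans_le hS1
    set F : ℂ → ℝ := fun z =>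
      g z - M * ‖z‖ ^ (-k) - ε * ‖z‖ ^ (N+1) with hFdef
    set A : Set ℂ := (fun z : ℂ => ‖z‖) ⁻¹' (Set.Icc R₁ S) with hAdef
    have hwA : w ∈ A := ⟨hw, hwS⟩
    have hAsubU : A ⊆ {z : ℂ | R < ‖z‖} := fun z hz => hRR₁.trans_le hz.1
    have hAcompact : IsCompact A := by
      refine (isCompact_closedBall (0:ℂ) S).of_isClosed_subset
        (isClosed_Icc.preimage continuous_norm) (fun z hz => ?_)
      simpa [Metric.mem_closedBall, Complex.dist_eq] using hz.2
    have hFcont : ContinuousOn F A := by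
      intro z hz
      have hzpos : 0 < ‖z‖ := hR₁pos.trans_le hz.1
      have hg : ContinuousAt g z :=
        (hsm.continuousOn).continuousAt (hUopen.mem_nhds (hAsubU hz))
      have hb1 : ContinuousAt (fun z : ℂ => ‖z‖ ^ (-k)) z :=
        (Real.continuousAt_rpow_const _ _ (Or.inl hzpos.ne')).comp
          continuous_norm.continuousAt
      have hb2' : ContinuousAt (fun z : ℂ => ‖z‖ ^ (N+1)) z :=
        (Real.continuousAt_rpow_const _ _ (Or.inl hzpos.ne')).comp
          continuous_norm.continuousAt
      exact ((hg.sub (hb1.const_mul M)).sub (hb2'.const_mul ε)).continuousWithinAt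
    obtain ⟨w₀, hw₀A, hmax⟩ := hAcompact.exists_isMaxOn ⟨w, hwA⟩ hFcont
    suffices hF0 : F w₀ ≤ 0 by
      have h1 : g w - M * ‖w‖ ^ (-k) - ε * ‖w‖ ^ (N+1) ≤ F w₀ :=
        hmax hwA
      linarith
    by_contra hF0'
    push_neg at hF0'
    set r : ℝ := ‖w₀‖ with hrdef
    have hr1 : R₁ ≤ r := hw₀A.1
    have hr2 : r ≤ S := hw₀A.2
    obtain ⟨hrpos, hf2, hf3, hf4⟩ := hr_facts r hr1
    have hw₀R : R < ‖w₀‖ := hRR₁.trans_le hr1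
    have hgw₀ : g w₀ ≤ K * r ^ N := hgrowth w₀ hw₀R
    have hXpos : 0 < r ^ (-k) := Real.rpow_pos_of_pos hrpos _
    have hYpos : 0 < r ^ (N+1) := Real.rpow_pos_of_pos hrpos _
    have hupos : 0 < r ^ (-(2:ℝ)) := Real.rpow_pos_of_pos hrpos _
    -- not on inner boundary
    have hne1 : R₁ < r := by
      rcases lt_or_eq_of_le hr1 with h | h
      · exact h
      · exfalso
        have hMB : K * R₁ ^ N ≤ M * R₁ ^ (-k) := by
          have : K * R₁ ^ (N+k) * R₁ ^ (-k) ≤ M * R₁ ^ (-k) :=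
            mul_le_mul_of_nonneg_right hM2 (Real.rpow_pos_of_pos hR₁pos _).le
          rwa [mul_assoc, ← Real.rpow_add hR₁pos, show N+k+(-k) = N by ring] at this
        have hεB : 0 < ε * R₁ ^ (N+1) := by positivity
        have hFw₀ : F w₀ = g w₀ - M * R₁ ^ (-k) - ε * R₁ ^ (N+1) := by
          have : F w₀ = g w₀ - M * r ^ (-k) - ε * r ^ (N+1) := rfl
          rw [this, ← h]
        rw [← h] at hgw₀
        linarith
    -- not on outer boundary
    have hne2 : r < S := by
      rcases lt_or_eq_of_le hr2 with h | h
      · exact h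
      · exfalso
        have hεB : K * S ^ N ≤ ε * S ^ (N+1) := by
          have h1 : ε * S ^ (N+1) = ε * S ^ N * S := by
            rw [Real.rpow_add hSpos, Real.rpow_one]; ring
          have h2 : K ≤ ε * S := by
            rw [div_le_iff₀ hε] at hKS; linarith [hKS]
          rw [h1]
          calc K * S ^ N = S ^ N * K := by ring
          _ ≤ S ^ N * (ε * S) := mul_le_mul_of_nonneg_left h2 (Real.rpow_pos_of_pos hSpos _).le
          _ = ε * S ^ N * S := by ring
        have hMB : 0 < M * S ^ (-k) := by positivity
        have hFw₀ : F w₀ = g w₀ - M * S ^ (-k) - ε * S ^ (N+1) := by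
          have : F w₀ = g w₀ - M * r ^ (-k) - ε * r ^ (N+1) := rfl
          rw [this, h]
        rw [h] at hgw₀
        linarith
    -- local max
    have hlocal : IsLocalMax F w₀ := by
      have hsub : ({z : ℂ | R₁ < ‖z‖} ∩ {z : ℂ | ‖z‖ < S}) ⊆ A :=
        fun z hz => ⟨le_of_lt hz.1, le_of_lt hz.2⟩
      refine hmax.isLocalMax (Filter.mem_of_superset ?_ hsub)
      exact IsOpen.mem_nhds
        ((isOpen_lt continuous_const continuous_norm).inter
          (isOpen_lt continuous_norm continuous_const))
        ⟨hne1, hne2⟩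
    have hlinex : IsLocalMax (fun s : ℝ => F (w₀ + s)) 0 := by
      have hcont : Filter.Tendsto (fun s : ℝ => w₀ + (s:ℂ)) (𝓝 0) (𝓝 w₀) := by
        have hc' : Continuous (fun s : ℝ => w₀ + (s:ℂ)) :=
          continuous_const.add Complex.continuous_ofReal
        simpa using hc'.tendsto 0
      have hev : ∀ᶠ s : ℝ in 𝓝 0, F (w₀ + s) ≤ F w₀ := hcont.eventually hlocal
      simpa [IsLocalMax, IsMaxFilter] using hev
    have hliney : IsLocalMax (fun s : ℝ => F (w₀ + s * Complex.I)) 0 := by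
      have hcont : Filter.Tendsto (fun s : ℝ => w₀ + (s:ℂ) * Complex.I) (𝓝 0) (𝓝 w₀) := by
        have hc' : Continuous (fun s : ℝ => w₀ + (s:ℂ) * Complex.I) :=
          continuous_const.add (Complex.continuous_ofReal.mul continuous_const)
        simpa using hc'.tendsto 0
      have hev : ∀ᶠ s : ℝ in 𝓝 0, F (w₀ + s * Complex.I) ≤ F w₀ := hcont.eventually hlocal
      simpa [IsLocalMax, IsMaxFilter] using hev
    -- second derivatives
    have hw₀ne : w₀ ≠ 0 := by
      have h0 : (0:ℝ) < ‖w₀‖ := hrpos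
      intro h
      simp [h] at h0
    obtain ⟨mx1, my1, hx1, hy1, hsum1⟩ := abs_rpow_hasD2At w₀ hw₀ne (-k)
    obtain ⟨mx2, my2, hx2, hy2, hsum2⟩ := abs_rpow_hasD2At w₀ hw₀ne (N+1)
    have hgat : ContDiffAt ℝ 2 g w₀ := by
      refine (hsm.contDiffAt (hUopen.mem_nhds hw₀R)).of_le ?_
      refine le_trans ?_ (WithTop.coe_le_coe.2 (le_top : (2:ℕ∞) ≤ ⊤))
      norm_cast
    have hgx : HasD2At (fun s : ℝ => g (w₀ + s)) (d2x g w₀) := by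
      apply hasD2At_of_contDiffAt
      have hL : ContDiffAt ℝ 2 (fun s : ℝ => w₀ + (s:ℂ)) 0 :=
        (contDiff_const.add Complex.ofRealCLM.contDiff).contDiffAt
      have hgat' : ContDiffAt ℝ 2 g (w₀ + ((0:ℝ):ℂ)) := by simpa using hgat
      exact ContDiffAt.comp (g := g) (f := fun s : ℝ => w₀ + (s:ℂ)) 0 hgat' hL
    have hgy : HasD2At (fun s : ℝ => g (w₀ + s * Complex.I)) (d2y g w₀) := by
      apply hasD2At_of_contDiffAt
      have hL : ContDiffAt ℝ 2 (fun s : ℝ => w₀ + (s:ℂ) * Complex.I) 0 :=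
        (contDiff_const.add (Complex.ofRealCLM.contDiff.mul contDiff_const)).contDiffAt
      have hgat' : ContDiffAt ℝ 2 g (w₀ + ((0:ℝ):ℂ) * Complex.I) := by simpa using hgat
      exact ContDiffAt.comp (g := g) (f := fun s : ℝ => w₀ + (s:ℂ) * Complex.I) 0 hgat' hL
    have hFx : HasD2At (fun s : ℝ => F (w₀ + s)) (d2x g w₀ - M * mx1 - ε * mx2) :=
      (hgx.sub (hx1.const_mul M)).sub (hx2.const_mul ε)
    have hFy : HasD2At (fun s : ℝ => F (w₀ + s * Complex.I)) (d2y g w₀ - M * my1 - ε * my2) :=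
      (hgy.sub (hy1.const_mul M)).sub (hy2.const_mul ε)
    have hmx : d2x g w₀ - M * mx1 - ε * mx2 ≤ 0 := hFx.nonpos_of_isLocalMax hlinex
    have hmy : d2y g w₀ - M * my1 - ε * my2 ≤ 0 := hFy.nonpos_of_isLocalMax hliney
    -- Laplacian bound
    have hΔ : d2x g w₀ + d2y g w₀ ≤
        M * ((-k)^2 * r ^ (-k-2)) + ε * ((N+1)^2 * r ^ (N+1-2)) := by
      have e1 : M * mx1 + M * my1 = M * ((-k)^2 * r ^ (-k-2)) := by
        rw [← mul_add, hsum1]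
      have e2 : ε * mx2 + ε * my2 = ε * ((N+1)^2 * r ^ (N+1-2)) := by
        rw [← mul_add, hsum2]
      linarith
    have hmain := hbineq w₀ hw₀R
    rw [← hrdef] at hmain
    -- rpow decompositions
    have ed1 : r ^ (-k-2) = r ^ (-k) * r ^ (-(2:ℝ)) := by
      rw [← Real.rpow_add hrpos]; ring_nf
    have ed2 : r ^ (N+1-2) = r ^ (N+1) * r ^ (-(2:ℝ)) := by
      rw [← Real.rpow_add hrpos]; ring_nf
    -- g w₀ lower bound
    have hglb : M * r ^ (-k) + ε * r ^ (N+1) < g w₀ := by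
      have hFw₀ : F w₀ = g w₀ - M * r ^ (-k) - ε * r ^ (N+1) := rfl
      linarith
    have hcoef : -c + r ^ (-(2:ℝ)) < 0 := by linarith
    have hprod : (-c + r ^ (-(2:ℝ))) * g w₀ ≤
        (-c + r ^ (-(2:ℝ))) * (M * r ^ (-k) + ε * r ^ (N+1)) :=
      mul_le_mul_of_nonpos_left hglb.le hcoef.le
    rw [ed1, ed2] at hΔ
    -- final contradiction
    set X := r ^ (-k)
    set Y := r ^ (N+1)
    set u := r ^ (-(2:ℝ))
    have hcomb : -(1/4) * (M * ((-k)^2 * (X * u)) + ε * ((N+1)^2 * (Y * u))) ≤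
        b * X + (-c + u) * (M * X + ε * Y) := by
      calc -(1/4) * (M * ((-k)^2 * (X * u)) + ε * ((N+1)^2 * (Y * u)))
          ≤ -(1/4) * (d2x g w₀ + d2y g w₀) := by linarith [hΔ]
        _ ≤ b * X + (-c + u) * g w₀ := hmain
        _ ≤ b * X + (-c + u) * (M * X + ε * Y) := by linarith
    have t1 : r ^ (-(2:ℝ)) * k^2 * (M * X) ≤ c * (M * X) :=
      mul_le_mul_of_nonneg_right hf2 (mul_pos hMpos hXpos).le
    have t2 : r ^ (-(2:ℝ)) * (N+1)^2 * (ε * Y) ≤ c * (ε * Y) :=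
      mul_le_mul_of_nonneg_right hf3 (mul_pos hε hYpos).le
    have t3 : r ^ (-(2:ℝ)) * (M * X) ≤ c/4 * (M * X) :=
      mul_le_mul_of_nonneg_right hf4 (mul_pos hMpos hXpos).le
    have t4 : r ^ (-(2:ℝ)) * (ε * Y) ≤ c/4 * (ε * Y) :=
      mul_le_mul_of_nonneg_right hf4 (mul_pos hε hYpos).le
    have t5 : b * X ≤ c * M / 2 * X := mul_le_mul_of_nonneg_right hb2 hXpos.le
    have t6 : 0 < c * ε * Y := mul_pos (mul_pos hc hε) hYpos
    linarith [t1, t2, t3, t4, t5, t6, hcomb]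
  -- limit ε → 0
  by_contra hcon
  push_neg at hcon
  set Y := ‖w‖ ^ (N+1) with hYdef
  have hYpos : 0 < Y := Real.rpow_pos_of_pos hrw _
  set d := g w - M * ‖w‖ ^ (-k) with hddef
  have hd : 0 < d := by rw [hddef]; linarith
  have hεpos : 0 < d / (2 * Y) := by positivity
  have := key (d / (2 * Y)) hεpos
  have heq : d / (2 * Y) * Y = d / 2 := by field_simp
  rw [heq] at this
  rw [hddef] at hd
  linarith
end Main
end
end

section
/- Let T > 0 and let f : ℝ × ℂ → ℝ be a bounded C² function with f ≥ 0, T-periodic in the first variable t, such that (∂_t² + ∂_x² + ∂_y²) f ≥ 0 at every point (i.e. Δf ≤ 0 for Δ = −(∂_t² + ∂_x² + ∂_y²)). Then f is constant. -/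
open MeasureTheory intervalIntegral Set Metric Complex Real

set_option synthInstance.maxHeartbeats 1000000
set_option maxHeartbeats 1000000
set_option linter.unusedSectionVars false

noncomputable section

namespace PeriodicSubharmonic

section Helpers
variable {H : Type*} [NormedAddCommGroup H] [NormedSpace ℝ H] [ProperSpace H]
variable {E : Type*} [NormedAddCommGroup E] [NormedSpace ℝ E] [CompleteSpace E]

lemma bound_on_compact (G : H × ℝ → E) (hG : Continuous G) (x₀ : H) (a b : ℝ) :
    ∃ C : ℝ, ∀ x ∈ closedBall x₀ 1, ∀ t ∈ uIcc a b, ‖G (x, t)‖ ≤ C := by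
  obtain ⟨C, hC⟩ := ((isCompact_closedBall x₀ 1).prod isCompact_uIcc).exists_bound_of_continuousOn
    (f := G) hG.continuousOn
  exact ⟨C, fun x hx t ht => hC (x, t) ⟨hx, ht⟩⟩

/-- Differentiation under the interval integral, Fréchet version, continuous data. -/
lemma hasFDerivAt_intervalIntegral (F : H → ℝ → E) (F' : H → ℝ → H →L[ℝ] E) (a b : ℝ)
    (hF : Continuous fun p : H × ℝ => F p.1 p.2)
    (hF' : Continuous fun p : H × ℝ => F' p.1 p.2)
    (hd : ∀ x t, HasFDerivAt (fun y => F y t) (F' x t) x) (x₀ : H) :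
    HasFDerivAt (fun x => ∫ t in a..b, F x t) (∫ t in a..b, F' x₀ t) x₀ := by
  obtain ⟨C, hC⟩ := bound_on_compact (fun p => F' p.1 p.2) hF' x₀ a b
  exact intervalIntegral.hasFDerivAt_integral_of_dominated_of_fderiv_le (𝕜 := ℝ)
    (bound := fun _ => C) (ball_mem_nhds x₀ one_pos)
    (Filter.Eventually.of_forall fun x =>
      ((hF.comp (Continuous.prodMk_right x)).aestronglyMeasurable))
    ((hF.comp (Continuous.prodMk_right x₀)).intervalIntegrable a b)
    ((hF'.comp (Continuous.prodMk_right x₀)).aestronglyMeasurable)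
    (Filter.Eventually.of_forall fun t ht x hx =>
      hC x (ball_subset_closedBall hx) t (uIoc_subset_uIcc ht))
    intervalIntegrable_const
    (Filter.Eventually.of_forall fun t _ x _ => hd x t)

/-- Differentiation under the interval integral, 1-dim version. -/
lemma hasDerivAt_intervalIntegral (F F' : ℝ → ℝ → E) (a b : ℝ)
    (hF : Continuous fun p : ℝ × ℝ => F p.1 p.2)
    (hF' : Continuous fun p : ℝ × ℝ => F' p.1 p.2)
    (hd : ∀ x t, HasDerivAt (fun y => F y t) (F' x t) x) (x₀ : ℝ) :
    HasDerivAt (fun x => ∫ t in a..b, F x t) (∫ t in a..b, F' x₀ t) x₀ := by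
  obtain ⟨C, hC⟩ := bound_on_compact (fun p => F' p.1 p.2) hF' x₀ a b
  exact (intervalIntegral.hasDerivAt_integral_of_dominated_loc_of_deriv_le (𝕜 := ℝ)
    (bound := fun _ => C) (ball_mem_nhds x₀ one_pos)
    (Filter.Eventually.of_forall fun x =>
      ((hF.comp (Continuous.prodMk_right x)).aestronglyMeasurable))
    ((hF.comp (Continuous.prodMk_right x₀)).intervalIntegrable a b)
    ((hF'.comp (Continuous.prodMk_right x₀)).aestronglyMeasurable)
    (Filter.Eventually.of_forall fun t ht x hx =>
      hC x (ball_subset_closedBall hx) t (uIoc_subset_uIcc ht))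
    intervalIntegrable_const
    (Filter.Eventually.of_forall fun t _ x _ => hd x t)).2

lemma continuous_intervalIntegral_param (F : H → ℝ → E) (a b : ℝ)
    (hF : Continuous fun p : H × ℝ => F p.1 p.2) :
    Continuous fun x => ∫ t in a..b, F x t :=
  intervalIntegral.continuous_parametric_intervalIntegral_of_continuous' (f := F) hF a b

end Helpers

/-- unit vector at angle θ -/
def ev (θ : ℝ) : ℂ := Complex.exp (θ * Complex.I)

lemma ev_hasDerivAt (θ : ℝ) : HasDerivAt ev (ev θ * Complex.I) θ := by
  have h1 : HasDerivAt (fun z : ℂ => Complex.exp (z * Complex.I))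
      (Complex.exp ((θ:ℂ) * Complex.I) * Complex.I) (θ:ℂ) := by
    exact ((Complex.hasDerivAt_exp ((θ:ℂ) * Complex.I)).comp (θ:ℂ)
      ((hasDerivAt_id (θ:ℂ)).mul_const Complex.I)).congr_deriv (by simp)
  exact h1.comp_ofReal

lemma ev_continuous : Continuous ev :=
  Complex.continuous_exp.comp (Complex.continuous_ofReal.mul continuous_const)

lemma ev_norm (θ : ℝ) : ‖ev θ‖ = 1 := by
  simp [ev, Complex.norm_exp_ofReal_mul_I]

lemma ev_zero : ev 0 = 1 := by simp [ev]

lemma ev_two_pi : ev (2 * π) = 1 := by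
  rw [ev]; push_cast; rw [← Complex.exp_two_pi_mul_I]

lemma quad_rotate (D : ℂ →L[ℝ] ℂ →L[ℝ] ℝ) (θ : ℝ) :
    D (ev θ) (ev θ) + D (ev θ * Complex.I) (ev θ * Complex.I)
      = D 1 1 + D Complex.I Complex.I := by
  have he : ev θ = (Real.cos θ) • (1:ℂ) + (Real.sin θ) • Complex.I := by
    rw [ev, Complex.exp_mul_I]
    simp [Complex.real_smul]
  have he' : ev θ * Complex.I = (-Real.sin θ) • (1:ℂ) + (Real.cos θ) • Complex.I := by
    rw [he]
    simp [Complex.real_smul]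
    ring_nf
    simp [Complex.I_sq]
    ring
  rw [he', he]
  simp only [map_add, _root_.map_smul, ContinuousLinearMap.add_apply,
    ContinuousLinearMap.smul_apply, smul_eq_mul, map_neg, ContinuousLinearMap.neg_apply, neg_smul]
  linear_combination ((D 1) 1 + (D Complex.I) Complex.I) * (Real.sin_sq_add_cos_sq θ)


/-- Core 2-dimensional lemma. -/
lemma core2d (u : ℂ → ℝ) (D1 : ℂ → ℂ →L[ℝ] ℝ) (D2 : ℂ → ℂ →L[ℝ] ℂ →L[ℝ] ℝ) (M : ℝ)
    (h1 : ∀ w, HasFDerivAt u (D1 w) w)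
    (h2 : ∀ w, HasFDerivAt D1 (D2 w) w)
    (h2c : Continuous D2)
    (hM : ∀ w, |u w| ≤ M)
    (hpos : ∀ w, 0 ≤ D2 w 1 1 + D2 w Complex.I Complex.I) :
    ∀ w, D2 w 1 1 + D2 w Complex.I Complex.I = 0 := by
  intro w₀
  by_contra hne
  have hM0 : 0 ≤ M := le_trans (abs_nonneg _) (hM w₀)
  set L : ℂ → ℝ := fun w => D2 w 1 1 + D2 w Complex.I Complex.I with hLdef
  have hc : 0 < L w₀ := lt_of_le_of_ne (hpos w₀) (Ne.symm hne)
  set c : ℝ := L w₀ with hcdef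
  have hLc : Continuous L :=
    ((h2c.clm_apply continuous_const).clm_apply continuous_const).add
      ((h2c.clm_apply continuous_const).clm_apply continuous_const)
  -- a ball on which L ≥ c/2
  obtain ⟨δ, hδpos, hδ⟩ : ∃ δ, 0 < δ ∧ ∀ w ∈ closedBall w₀ δ, c / 2 ≤ L w := by
    have hmem : L ⁻¹' Ioi (c / 2) ∈ nhds w₀ :=
      hLc.continuousAt.preimage_mem_nhds (Ioi_mem_nhds (by rw [← hcdef]; exact half_lt_self hc))
    obtain ⟨ε, hε, hsub⟩ := Metric.mem_nhds_iff.1 hmem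
    refine ⟨ε / 2, by linarith, fun w hw => ?_⟩
    have : w ∈ ball w₀ ε := lt_of_le_of_lt (mem_closedBall.1 hw) (by linarith)
    exact le_of_lt (hsub this)
  -- the circles
  set γ : ℝ → ℝ → ℂ := fun r θ => w₀ + r • ev θ with hγdef
  have hγc : Continuous fun p : ℝ × ℝ => γ p.1 p.2 :=
    continuous_const.add (continuous_fst.smul (ev_continuous.comp continuous_snd))
  have hγr : ∀ θ r, HasDerivAt (fun r => γ r θ) (ev θ) r := fun θ r => by
    have h := ((hasDerivAt_id r).smul_const (ev θ)).const_add w₀; rw [one_smul] at h; exact h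
  have hγθ : ∀ r θ, HasDerivAt (fun θ => γ r θ) (r • (ev θ * Complex.I)) θ := fun r θ =>
    ((ev_hasDerivAt θ).const_smul r).const_add w₀
  have hball : ∀ r θ, 0 ≤ r → r ≤ δ → γ r θ ∈ closedBall w₀ δ := by
    intro r θ h0 hr
    have : dist (γ r θ) w₀ = r := by
      rw [hγdef]
      simp only [dist_eq_norm, add_sub_cancel_left]
      rw [norm_smul, ev_norm, Real.norm_eq_abs, _root_.abs_of_nonneg h0, mul_one]
    simp only [mem_closedBall, this]; exact hr
  have huc : Continuous u := by
    rw [continuous_iff_continuousAt]; exact fun w => (h1 w).differentiableAt.continuousAt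
  have hD1c : Continuous D1 := by
    rw [continuous_iff_continuousAt]; exact fun w => (h2 w).differentiableAt.continuousAt
  -- integrands, jointly continuous
  have hcu : Continuous fun p : ℝ × ℝ => u (γ p.1 p.2) := huc.comp hγc
  have hcev : Continuous fun p : ℝ × ℝ => ev p.2 := ev_continuous.comp continuous_snd
  have hcevI : Continuous fun p : ℝ × ℝ => ev p.2 * Complex.I := hcev.mul continuous_const
  have hcD1 : Continuous fun p : ℝ × ℝ => D1 (γ p.1 p.2) (ev p.2) :=
    (hD1c.comp hγc).clm_apply hcev
  have hcD2 : Continuous fun p : ℝ × ℝ => D2 (γ p.1 p.2) (ev p.2) (ev p.2) :=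
    ((h2c.comp hγc).clm_apply hcev).clm_apply hcev
  have hcD2I : Continuous fun p : ℝ × ℝ =>
      D2 (γ p.1 p.2) (ev p.2 * Complex.I) (ev p.2 * Complex.I) :=
    ((h2c.comp hγc).clm_apply hcevI).clm_apply hcevI
  have hcL : Continuous fun p : ℝ × ℝ => L (γ p.1 p.2) := hLc.comp hγc
  -- the averages
  set A : ℝ → ℝ := fun r => ∫ θ in (0:ℝ)..(2 * π), u (γ r θ) with hAdef
  set A1 : ℝ → ℝ := fun r => ∫ θ in (0:ℝ)..(2 * π), D1 (γ r θ) (ev θ) with hA1def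
  set A2 : ℝ → ℝ := fun r => ∫ θ in (0:ℝ)..(2 * π), D2 (γ r θ) (ev θ) (ev θ) with hA2def
  set J : ℝ → ℝ :=
    fun r => ∫ θ in (0:ℝ)..(2 * π), D2 (γ r θ) (ev θ * Complex.I) (ev θ * Complex.I) with hJdef
  have hAd : ∀ r, HasDerivAt A (A1 r) r := fun r =>
    hasDerivAt_intervalIntegral (fun r θ => u (γ r θ)) (fun r θ => D1 (γ r θ) (ev θ)) _ _ hcu hcD1
      (fun x θ => (h1 (γ x θ)).comp_hasDerivAt x (hγr θ x)) r
  have hA1d : ∀ r, HasDerivAt A1 (A2 r) r := fun r =>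
    hasDerivAt_intervalIntegral _ _ _ _ hcD1 hcD2
      (fun x θ => by
        simpa using ((h2 (γ x θ)).comp_hasDerivAt x (hγr θ x)).clm_apply
          (hasDerivAt_const x (ev θ))) r
  have hpi : (0:ℝ) ≤ 2 * π := by positivity
  -- the FTC identity coming from periodicity in θ
  have hkeyId : ∀ r : ℝ, r * A1 r = r ^ 2 * J r := by
    intro r
    have hB : ∀ θ : ℝ, HasDerivAt (fun θ => D1 (γ r θ) (r • (ev θ * Complex.I)))
        (r ^ 2 * D2 (γ r θ) (ev θ * Complex.I) (ev θ * Complex.I)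
          - r * D1 (γ r θ) (ev θ)) θ := by
      intro θ
      have hc' : HasDerivAt (fun θ => D1 (γ r θ)) (D2 (γ r θ) (r • (ev θ * Complex.I))) θ :=
        (h2 (γ r θ)).comp_hasDerivAt θ (hγθ r θ)
      have hv : HasDerivAt (fun θ => r • (ev θ * Complex.I))
          (r • (ev θ * Complex.I * Complex.I)) θ :=
        ((ev_hasDerivAt θ).mul_const Complex.I).const_smul r
      have h := hc'.clm_apply hv
      refine h.congr_deriv ?_
      have hII : ev θ * Complex.I * Complex.I = -ev θ := by
        rw [mul_assoc, Complex.I_mul_I, mul_neg_one]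
      rw [hII]
      simp only [_root_.map_smul, ContinuousLinearMap.smul_apply, smul_eq_mul, map_neg,
        smul_neg]
      ring
    have hint2I : IntervalIntegrable
        (fun θ => D2 (γ r θ) (ev θ * Complex.I) (ev θ * Complex.I)) volume 0 (2 * π) :=
      ((hcD2I.comp (Continuous.prodMk_right r)).intervalIntegrable _ _)
    have hint1 : IntervalIntegrable (fun θ => D1 (γ r θ) (ev θ)) volume 0 (2 * π) :=
      ((hcD1.comp (Continuous.prodMk_right r)).intervalIntegrable _ _)
    have hInt : (∫ θ in (0:ℝ)..(2 * π),
        (r ^ 2 * D2 (γ r θ) (ev θ * Complex.I) (ev θ * Complex.I)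
          - r * D1 (γ r θ) (ev θ)))
        = D1 (γ r (2 * π)) (r • (ev (2 * π) * Complex.I))
          - D1 (γ r 0) (r • (ev 0 * Complex.I)) :=
      intervalIntegral.integral_eq_sub_of_hasDerivAt (fun θ _ => hB θ)
        (((continuous_const.mul (hcD2I.comp (Continuous.prodMk_right r))).sub
          (continuous_const.mul (hcD1.comp (Continuous.prodMk_right r)))).intervalIntegrable _ _)
    have hi2 : IntervalIntegrable
        (fun θ => r ^ 2 * D2 (γ r θ) (ev θ * Complex.I) (ev θ * Complex.I)) volume 0 (2 * π) :=
      (continuous_const.mul (hcD2I.comp (Continuous.prodMk_right r))).intervalIntegrable _ _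
    have hi1 : IntervalIntegrable
        (fun θ => r * D1 (γ r θ) (ev θ)) volume 0 (2 * π) :=
      (continuous_const.mul (hcD1.comp (Continuous.prodMk_right r))).intervalIntegrable _ _
    rw [intervalIntegral.integral_sub hi2 hi1,
      intervalIntegral.integral_const_mul, intervalIntegral.integral_const_mul] at hInt
    have hsame : γ r (2 * π) = γ r 0 := by rw [hγdef]; simp [ev_two_pi, ev_zero]
    rw [hsame, ev_two_pi, ev_zero] at hInt
    simp only [sub_self] at hInt
    linarith [hInt]
  -- derivative of g r = r * A1 r
  set g : ℝ → ℝ := fun r => r * A1 r with hgdef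
  have hgd : ∀ r, HasDerivAt g (A1 r + r * A2 r) r := fun r => by
    exact ((hasDerivAt_id r).mul (hA1d r)).congr_deriv (by simp)
  have hIntL : ∀ r, IntervalIntegrable (fun θ => L (γ r θ)) volume 0 (2 * π) := fun r =>
    ((hcL.comp (Continuous.prodMk_right r)).intervalIntegrable _ _)
  have hg' : ∀ r, 0 < r → A1 r + r * A2 r = r * ∫ θ in (0:ℝ)..(2 * π), L (γ r θ) := by
    intro r hr
    have hA1r : A1 r = r * J r := by
      have h := hkeyId r
      have : r * A1 r = r * (r * J r) := by rw [h]; ring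
      exact mul_left_cancel₀ (ne_of_gt hr) this
    have hint2 : IntervalIntegrable (fun θ => D2 (γ r θ) (ev θ) (ev θ)) volume 0 (2 * π) :=
      ((hcD2.comp (Continuous.prodMk_right r)).intervalIntegrable _ _)
    have hint2I : IntervalIntegrable
        (fun θ => D2 (γ r θ) (ev θ * Complex.I) (ev θ * Complex.I)) volume 0 (2 * π) :=
      ((hcD2I.comp (Continuous.prodMk_right r)).intervalIntegrable _ _)
    have hsum : A2 r + J r = ∫ θ in (0:ℝ)..(2 * π), L (γ r θ) := by
      rw [hA2def, hJdef, ← intervalIntegral.integral_add hint2 hint2I]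
      exact intervalIntegral.integral_congr fun θ _ => quad_rotate (D2 (γ r θ)) θ
    rw [hA1r]
    calc r * J r + r * A2 r = r * (A2 r + J r) := by ring
    _ = r * ∫ θ in (0:ℝ)..(2 * π), L (γ r θ) := by rw [hsum]
  have hg'nonneg : ∀ r, 0 < r → 0 ≤ A1 r + r * A2 r := by
    intro r hr
    rw [hg' r hr]
    exact mul_nonneg hr.le (intervalIntegral.integral_nonneg hpi fun θ _ => hpos _)
  have hg'big : ∀ r, 0 < r → r ≤ δ → π * c * r ≤ A1 r + r * A2 r := by
    intro r hr hrδ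
    rw [hg' r hr]
    have hlow : (∫ _θ in (0:ℝ)..(2 * π), c / 2) ≤ ∫ θ in (0:ℝ)..(2 * π), L (γ r θ) :=
      intervalIntegral.integral_mono_on hpi intervalIntegrable_const (hIntL r)
        (fun θ _ => hδ _ (hball r θ hr.le hrδ))
    rw [intervalIntegral.integral_const, smul_eq_mul] at hlow
    calc π * c * r = r * ((2 * π - 0) * (c / 2)) := by ring
    _ ≤ r * ∫ θ in (0:ℝ)..(2 * π), L (γ r θ) := by
        apply mul_le_mul_of_nonneg_left hlow hr.le
  -- quantitative positivity: g δ ≥ a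
  set a : ℝ := π * c * δ ^ 2 / 2 with hadef
  have hapos : 0 < a := by
    have := Real.pi_pos
    rw [hadef]; positivity
  have hgδ : a ≤ g δ := by
    set ψ : ℝ → ℝ := fun r => g r - π * c / 2 * r ^ 2 with hψdef
    have hψd : ∀ r, HasDerivAt ψ (A1 r + r * A2 r - π * c * r) r := by
      intro r
      have h2' : HasDerivAt (fun r : ℝ => π * c / 2 * r ^ 2) (π * c * r) r := by
        have := (hasDerivAt_pow 2 r).const_mul (π * c / 2)
        refine this.congr_deriv ?_
        norm_num
        ring
      exact (hgd r).sub h2'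
    have hψc : Continuous ψ := by
      rw [continuous_iff_continuousAt]
      exact fun x => (hψd x).differentiableAt.continuousAt
    have hmono : MonotoneOn ψ (Icc 0 δ) := by
      apply monotoneOn_of_deriv_nonneg (convex_Icc 0 δ) hψc.continuousOn
      · exact fun x _ => (hψd x).differentiableAt.differentiableWithinAt
      · intro x hx
        rw [interior_Icc] at hx
        rw [(hψd x).deriv]
        have := hg'big x hx.1 hx.2.le
        linarith
    have h0δ := hmono (left_mem_Icc.2 hδpos.le) (right_mem_Icc.2 hδpos.le) hδpos.le
    have hψ0 : ψ 0 = 0 := by rw [hψdef, hgdef]; simp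
    rw [hψ0, hψdef] at h0δ
    simp only [hadef]
    linarith [h0δ]
  -- g stays above a for r ≥ δ
  have hgc : Continuous g := by
    rw [continuous_iff_continuousAt]
    exact fun x => (hgd x).differentiableAt.continuousAt
  have hglb : ∀ r, δ ≤ r → a ≤ g r := by
    intro r hr
    have hmono : MonotoneOn g (Icc δ r) := by
      apply monotoneOn_of_deriv_nonneg (convex_Icc δ r) hgc.continuousOn
      · exact fun x _ => (hgd x).differentiableAt.differentiableWithinAt
      · intro x hx
        rw [interior_Icc] at hx
        rw [(hgd x).deriv]
        exact hg'nonneg x (lt_trans hδpos hx.1)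
    exact le_trans hgδ (hmono (left_mem_Icc.2 hr) (right_mem_Icc.2 hr) hr)
  have hA1lb : ∀ r, δ ≤ r → a / r ≤ A1 r := by
    intro r hr
    have hrpos : 0 < r := lt_of_lt_of_le hδpos hr
    rw [div_le_iff₀ hrpos]
    calc a ≤ g r := hglb r hr
    _ = A1 r * r := by rw [hgdef]; ring
  -- logarithmic growth beats boundedness
  set R : ℝ := δ * Real.exp ((4 * π * M + 1) / a) with hRdef
  have hRδ : δ ≤ R := by
    have h1' : 1 ≤ Real.exp ((4 * π * M + 1) / a) := by
      apply Real.one_le_exp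
      have := Real.pi_pos
      positivity
    calc δ = δ * 1 := by ring
    _ ≤ R := by rw [hRdef]; exact mul_le_mul_of_nonneg_left h1' hδpos.le
  have hAc : Continuous A := by
    rw [continuous_iff_continuousAt]
    exact fun x => (hAd x).differentiableAt.continuousAt
  set φ : ℝ → ℝ := fun r => A r - a * Real.log r with hφdef
  have hφmono : MonotoneOn φ (Icc δ R) := by
    have hsub0 : Icc δ R ⊆ ({0}ᶜ : Set ℝ) := fun x hx => by
      simp only [mem_compl_iff, mem_singleton_iff]
      exact ne_of_gt (lt_of_lt_of_le hδpos hx.1)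
    have hφcont : ContinuousOn φ (Icc δ R) :=
      hAc.continuousOn.sub (continuousOn_const.mul (Real.continuousOn_log.mono hsub0))
    apply monotoneOn_of_deriv_nonneg (convex_Icc δ R) hφcont
    · intro x hx
      rw [interior_Icc] at hx
      have hx0 : x ≠ 0 := ne_of_gt (lt_trans hδpos hx.1)
      exact ((hAd x).sub ((Real.hasDerivAt_log hx0).const_mul a)).differentiableAt.differentiableWithinAt
    · intro x hx
      rw [interior_Icc] at hx
      have hx0 : 0 < x := lt_trans hδpos hx.1
      have hd : HasDerivAt φ (A1 x - a * x⁻¹) x :=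
        (hAd x).sub ((Real.hasDerivAt_log hx0.ne').const_mul a)
      rw [hd.deriv]
      have hlb := hA1lb x hx.1.le
      rw [div_eq_mul_inv] at hlb
      linarith
  have hcomp := hφmono (left_mem_Icc.2 hRδ) (right_mem_Icc.2 hRδ) hRδ
  have hAbd : ∀ r, |A r| ≤ M * (2 * π) := by
    intro r
    have h := intervalIntegral.norm_integral_le_of_norm_le_const
      (C := M) (f := fun θ => u (γ r θ)) (a := 0) (b := 2 * π)
      (fun θ _ => by rw [Real.norm_eq_abs]; exact hM _)
    rw [Real.norm_eq_abs] at h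
    calc |A r| ≤ M * |2 * π - 0| := h
    _ = M * (2 * π) := by rw [sub_zero, _root_.abs_of_nonneg hpi]
  have hlogR : Real.log R = Real.log δ + (4 * π * M + 1) / a := by
    rw [hRdef, Real.log_mul (ne_of_gt hδpos) (Real.exp_pos _).ne', Real.log_exp]
  simp only [hφdef] at hcomp
  rw [hlogR, mul_add] at hcomp
  have hX : a * ((4 * π * M + 1) / a) = 4 * π * M + 1 := by field_simp
  have h1' := hAbd δ
  have h2' := hAbd R
  rw [abs_le] at h1' h2'
  have : (4:ℝ) * π * M + 1 ≤ 4 * π * M := by nlinarith [hcomp, hX, h1'.1, h1'.2, h2'.1, h2'.2]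
  linarith


instance : ContinuousAdd ((ℝ × ℂ) →L[ℝ] (ℝ × ℂ) →L[ℝ] ℝ) := by
  have h : IsTopologicalAddGroup ((ℝ × ℂ) →L[ℝ] (ℝ × ℂ) →L[ℝ] ℝ) := inferInstance
  exact h.toContinuousAdd

/-- a continuous nonnegative function with vanishing interval integral vanishes -/
lemma eq_zero_of_nonneg_of_integral_zero {S : ℝ → ℝ} {T : ℝ} (hT : 0 < T) (hc : Continuous S)
    (hnn : ∀ t, 0 ≤ S t) (hzero : (∫ t in (0:ℝ)..T, S t) = 0) {t₀ : ℝ}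
    (ht₀ : t₀ ∈ Icc 0 T) : S t₀ = 0 := by
  by_contra hne
  have hpos : 0 < S t₀ := lt_of_le_of_ne (hnn t₀) (Ne.symm hne)
  have hU : S ⁻¹' Ioi (S t₀ / 2) ∈ nhds t₀ :=
    hc.continuousAt.preimage_mem_nhds (Ioi_mem_nhds (half_lt_self hpos))
  obtain ⟨ε, hε, hsub⟩ := Metric.mem_nhds_iff.1 hU
  set l : ℝ := max 0 (t₀ - ε / 2) with hl
  set r : ℝ := min T (t₀ + ε / 2) with hr
  have hl0 : 0 ≤ l := le_max_left _ _
  have hrT : r ≤ T := min_le_left _ _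
  have hlr : l < r := by
    rw [hl, hr, lt_min_iff, max_lt_iff, max_lt_iff]
    exact ⟨⟨hT, by linarith [ht₀.2]⟩, ⟨by linarith [ht₀.1], by linarith⟩⟩
  have hmid : 0 < ∫ t in l..r, S t := by
    apply intervalIntegral_pos_of_pos_on (hc.intervalIntegrable _ _) _ hlr
    intro x hx
    have hxball : x ∈ ball t₀ ε := by
      rw [mem_ball, Real.dist_eq, abs_lt]
      have h1 := hx.1
      have h2 := hx.2
      have h3 : t₀ - ε / 2 ≤ l := le_max_right _ _
      have h4 : r ≤ t₀ + ε / 2 := min_le_right _ _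
      constructor <;> linarith
    have := hsub hxball
    rw [mem_preimage, mem_Ioi] at this
    linarith
  have h1 : 0 ≤ ∫ t in (0:ℝ)..l, S t := integral_nonneg hl0 fun u _ => hnn u
  have h3 : 0 ≤ ∫ t in r..T, S t := integral_nonneg hrT fun u _ => hnn u
  have hsplit : (∫ t in (0:ℝ)..l, S t) + (∫ t in l..r, S t) + (∫ t in r..T, S t)
      = ∫ t in (0:ℝ)..T, S t := by
    rw [integral_add_adjacent_intervals (hc.intervalIntegrable _ _) (hc.intervalIntegrable _ _),
      integral_add_adjacent_intervals (hc.intervalIntegrable _ _) (hc.intervalIntegrable _ _)]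
  rw [hzero] at hsplit
  linarith

/-- Partial derivative `∂_t` of a function on `ℝ × ℂ` (coordinates `(t, w)`, `w = x + i y`). -/
def pt (F : ℝ × ℂ → ℝ) : ℝ × ℂ → ℝ := fun p => deriv (fun s : ℝ => F (s, p.2)) p.1

/-- Partial derivative `∂ₓ` of a function on `ℝ × ℂ`. -/
def px (F : ℝ × ℂ → ℝ) : ℝ × ℂ → ℝ := fun p => deriv (fun s : ℝ => F (p.1, p.2 + s)) 0

/-- Partial derivative `∂_y` of a function on `ℝ × ℂ`. -/
def py (F : ℝ × ℂ → ℝ) : ℝ × ℂ → ℝ :=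
  fun p => deriv (fun s : ℝ => F (p.1, p.2 + s * Complex.I)) 0

/-- A bounded nonnegative subharmonic function on `S¹_T × ℂ` is constant
(the lemma of §7.1.4 of the paper).  Here `Δ = −(∂_t² + ∂ₓ² + ∂_y²)`, and the subharmonicity
`Δ f ≤ 0` is taken pointwise for the `C²` function `f`. -/
theorem bounded_nonneg_subharmonic_constant (T : ℝ) (hT : 0 < T) (f : ℝ × ℂ → ℝ)
    (hf_sm : ContDiff ℝ 2 f)
    (hf_bdd : ∃ M : ℝ, ∀ p : ℝ × ℂ, |f p| ≤ M)
    (hf_nonneg : ∀ p : ℝ × ℂ, 0 ≤ f p)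
    (hf_per : ∀ t : ℝ, ∀ w : ℂ, f (t + T, w) = f (t, w))
    (hf_sub : ∀ p : ℝ × ℂ, 0 ≤ pt (pt f) p + px (px f) p + py (py f) p) :
    ∀ p q : ℝ × ℂ, f p = f q := by
  obtain ⟨M, hM⟩ := hf_bdd
  have hfdiff : Differentiable ℝ f := hf_sm.differentiable (by norm_num)
  set g1 : ℝ × ℂ → (ℝ × ℂ) →L[ℝ] ℝ := fderiv ℝ f with hg1def
  have hfd : ∀ p, HasFDerivAt f (g1 p) p := fun p => (hfdiff p).hasFDerivAt
  have hg1_cd : ContDiff ℝ 1 g1 := hf_sm.fderiv_right (le_refl _)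
  set H2 : ℝ × ℂ → (ℝ × ℂ) →L[ℝ] (ℝ × ℂ) →L[ℝ] ℝ := fderiv ℝ g1 with hH2def
  have hg1d : ∀ p, HasFDerivAt g1 (H2 p) p := fun p =>
    ((hg1_cd.differentiable (by norm_num)) p).hasFDerivAt
  have hH2c : Continuous H2 := hg1_cd.continuous_fderiv (by norm_num)
  have hg1c : Continuous g1 := hg1_cd.continuous
  have hfc : Continuous f := hf_sm.continuous
  -- the three coordinate lines
  have hline_t : ∀ (s : ℝ) (w : ℂ),
      HasDerivAt (fun s : ℝ => ((s, w) : ℝ × ℂ)) (1, 0) s := fun s w =>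
    (hasDerivAt_id s).prodMk (hasDerivAt_const s w)
  have hline_x : ∀ (t s : ℝ) (w : ℂ),
      HasDerivAt (fun s : ℝ => ((t, w + s) : ℝ × ℂ)) (0, 1) s := fun t s w =>
    (hasDerivAt_const s t).prodMk (by
      simpa using (Complex.ofRealCLM.hasDerivAt (x := s)).const_add w)
  have hline_y : ∀ (t s : ℝ) (w : ℂ),
      HasDerivAt (fun s : ℝ => ((t, w + s * Complex.I) : ℝ × ℂ)) (0, Complex.I) s := fun t s w =>
    (hasDerivAt_const s t).prodMk (by
      simpa using ((Complex.ofRealCLM.hasDerivAt (x := s)).mul_const Complex.I).const_add w)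
  -- identification of first partial derivatives
  have hpt1 : pt f = fun p => g1 p (1, 0) := by
    funext p
    exact ((hfd (p.1, p.2)).comp_hasDerivAt p.1 (hline_t p.1 p.2)).deriv
  have hpx1 : px f = fun p => g1 p (0, 1) := by
    funext p
    have h := (hfd (p.1, p.2 + (0:ℝ))).comp_hasDerivAt 0 (hline_x p.1 0 p.2)
    have h' := h.deriv; simp at h'; exact h'
  have hpy1 : py f = fun p => g1 p (0, Complex.I) := by
    funext p
    have h := (hfd (p.1, p.2 + (0:ℝ) * Complex.I)).comp_hasDerivAt 0 (hline_y p.1 0 p.2)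
    have h' := h.deriv; simp at h'; exact h'
  -- identification of second partial derivatives
  have hpt2 : ∀ p, pt (pt f) p = H2 p (1, 0) (1, 0) := by
    intro p
    rw [pt, hpt1]
    have h := ((hg1d (p.1, p.2)).comp_hasDerivAt p.1 (hline_t p.1 p.2)).clm_apply
      (hasDerivAt_const p.1 ((1:ℝ), (0:ℂ)))
    simpa using h.deriv
  have hpx2 : ∀ p, px (px f) p = H2 p (0, 1) (0, 1) := by
    intro p
    rw [px, hpx1]
    have h := ((hg1d (p.1, p.2 + (0:ℝ))).comp_hasDerivAt 0 (hline_x p.1 0 p.2)).clm_apply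
      (hasDerivAt_const 0 ((0:ℝ), (1:ℂ)))
    simpa using h.deriv
  have hpy2 : ∀ p, py (py f) p = H2 p (0, Complex.I) (0, Complex.I) := by
    intro p
    rw [py, hpy1]
    have h0 := (hg1d (p.1, p.2 + (0:ℝ) * Complex.I)).comp_hasDerivAt (0:ℝ) (hline_y p.1 0 p.2)
    have h := h0.clm_apply (hasDerivAt_const (0:ℝ) (((0:ℝ), Complex.I) : ℝ × ℂ))
    simpa using h.deriv
  have hsub' : ∀ p, 0 ≤ H2 p (1, 0) (1, 0) + H2 p (0, 1) (0, 1)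
      + H2 p (0, Complex.I) (0, Complex.I) := by
    intro p
    have := hf_sub p
    rwa [hpt2, hpx2, hpy2] at this
  -- periodicity of f and of its derivative
  have hfper' : ∀ p : ℝ × ℂ, f (p + ((T:ℝ), (0:ℂ))) = f p := by
    intro p
    have h := hf_per p.1 p.2
    have he : p + ((T:ℝ), (0:ℂ)) = (p.1 + T, p.2) := by
      apply Prod.ext <;> simp
    rw [he, h]
  have hg1per : ∀ p : ℝ × ℂ, g1 (p + ((T:ℝ), (0:ℂ))) = g1 p := by
    intro p
    have htr : HasFDerivAt (fun q : ℝ × ℂ => q + ((T:ℝ), (0:ℂ)))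
        (ContinuousLinearMap.id ℝ (ℝ × ℂ)) p := (hasFDerivAt_id p).add_const _
    have h1 := (hfd (p + ((T:ℝ), (0:ℂ)))).comp p htr
    have h1' : HasFDerivAt f
        ((g1 (p + ((T:ℝ), (0:ℂ)))).comp (ContinuousLinearMap.id ℝ (ℝ × ℂ))) p := by
      rw [← funext hfper']
      exact h1
    have h2 := h1'.unique (hfd p)
    rwa [ContinuousLinearMap.comp_id] at h2
  have hfTw : ∀ w : ℂ, f (T, w) = f (0, w) := by
    intro w
    have := hfper' (0, w)
    have he : ((0:ℝ), w) + ((T:ℝ), (0:ℂ)) = ((T:ℝ), w) := by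
      apply Prod.ext <;> simp
    rwa [he] at this
  have hg1T : ∀ w : ℂ, g1 (T, w) = g1 (0, w) := by
    intro w
    have := hg1per (0, w)
    have he : ((0:ℝ), w) + ((T:ℝ), (0:ℂ)) = ((T:ℝ), w) := by
      apply Prod.ext <;> simp
    rwa [he] at this
  -- the squared function and its derivatives
  set Q : ℝ × ℂ → ℝ := fun p => f p * f p with hQdef
  have hQc : Continuous Q := hfc.mul hfc
  set Dq : ℝ × ℂ → (ℝ × ℂ) →L[ℝ] ℝ := fun p => (2 * f p) • g1 p with hDqdef
  have hq1 : ∀ p, HasFDerivAt Q (Dq p) p := by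
    intro p
    have h := (hfd p).mul (hfd p)
    have he : Dq p = f p • g1 p + f p • g1 p := by
      simp only [hDqdef]
      rw [two_mul, add_smul]
    rw [he]
    exact h
  set E2 : ℝ × ℂ → (ℝ × ℂ) →L[ℝ] (ℝ × ℂ) →L[ℝ] ℝ :=
    fun p => (2 * f p) • H2 p + (((2:ℝ) • g1 p).smulRight (g1 p)) with hE2def
  have hq2 : ∀ p, HasFDerivAt Dq (E2 p) p := by
    intro p
    have hc2f : HasFDerivAt (fun p : ℝ × ℂ => 2 * f p) ((2:ℝ) • g1 p) p := (hfd p).const_mul 2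
    exact hc2f.smul (hg1d p)
  have hE2val : ∀ (p : ℝ × ℂ) (v w' : ℝ × ℂ),
      E2 p v w' = 2 * f p * H2 p v w' + 2 * g1 p v * g1 p w' := by
    intro p v w'
    simp only [hE2def, ContinuousLinearMap.add_apply, ContinuousLinearMap.smul_apply,
      ContinuousLinearMap.smulRight_apply, ContinuousLinearMap.coe_smul', Pi.smul_apply,
      smul_eq_mul]
    try ring
  have hsr : Continuous fun p : ℝ × ℂ => (((2:ℝ) • g1 p).smulRight (g1 p)) := by
    have h : Continuous fun p : ℝ × ℂ =>
        (ContinuousLinearMap.smulRightL ℝ (ℝ × ℂ) ((ℝ × ℂ) →L[ℝ] ℝ)) ((2:ℝ) • g1 p) (g1 p) :=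
      Continuous.clm_apply (Continuous.clm_apply continuous_const (hg1c.const_smul (2:ℝ))) hg1c
    exact h
  have hE2c : Continuous E2 := ((continuous_const.mul hfc).smul hH2c).add hsr
  have hDqc : Continuous Dq := (continuous_const.mul hfc).smul hg1c
  -- embedding of ℂ and restriction of linear maps
  set Jc : ℂ →L[ℝ] ℝ × ℂ := (0 : ℂ →L[ℝ] ℝ).prod (ContinuousLinearMap.id ℝ ℂ) with hJcdef
  have hJcv : ∀ v : ℂ, Jc v = (0, v) := fun v => rfl
  have hlineF : ∀ (t : ℝ) (w : ℂ), HasFDerivAt (fun w : ℂ => ((t, w) : ℝ × ℂ)) Jc w :=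
    fun t w => (hasFDerivAt_const t w).prodMk (hasFDerivAt_id w)
  set Φ : ((ℝ × ℂ) →L[ℝ] ℝ) →L[ℝ] ℂ →L[ℝ] ℝ :=
    (ContinuousLinearMap.compL ℝ ℂ (ℝ × ℂ) ℝ).flip Jc with hΦdef
  have hΦA : ∀ A : (ℝ × ℂ) →L[ℝ] ℝ, Φ A = A.comp Jc := fun A => rfl
  have hΦv : ∀ (A : (ℝ × ℂ) →L[ℝ] ℝ) (v : ℂ), Φ A v = A (0, v) := fun A v => rfl
  set D2q : ℝ × ℂ → ℂ →L[ℝ] ℂ →L[ℝ] ℝ := fun p => Φ.comp ((E2 p).comp Jc) with hD2qdef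
  have hD1q_at : ∀ (t : ℝ) (w : ℂ), HasFDerivAt (fun w => Q (t, w)) (Φ (Dq (t, w))) w := by
    intro t w
    have h := (hq1 (t, w)).comp w (hlineF t w)
    rw [hΦA]
    exact h
  have hD2q_at : ∀ (t : ℝ) (w : ℂ),
      HasFDerivAt (fun w => Φ (Dq (t, w))) (D2q (t, w)) w := by
    intro t w
    have hinner : HasFDerivAt (fun w : ℂ => Dq (t, w)) ((E2 (t, w)).comp Jc) w :=
      (hq2 (t, w)).comp w (hlineF t w)
    exact (Φ.hasFDerivAt.comp w hinner : _)
  have hD2qval : ∀ (p : ℝ × ℂ) (v v' : ℂ),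
      D2q p v v' = 2 * f p * H2 p (0, v) (0, v') + 2 * g1 p (0, v) * g1 p (0, v') := by
    intro p v v'
    have : D2q p v v' = E2 p (0, v) (0, v') := rfl
    rw [this, hE2val]
  have hD2qc : Continuous D2q := continuous_const.clm_comp (hE2c.clm_comp continuous_const)
  have sw : Continuous fun p : ℂ × ℝ => ((p.2, p.1) : ℝ × ℂ) :=
    continuous_snd.prodMk continuous_fst
  -- the averaged function on ℂ
  set u : ℂ → ℝ := fun w => ∫ t in (0:ℝ)..T, Q (t, w) with hudef
  set U1 : ℂ → ℂ →L[ℝ] ℝ := fun w => ∫ t in (0:ℝ)..T, Φ (Dq (t, w)) with hU1def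
  set U2 : ℂ → ℂ →L[ℝ] ℂ →L[ℝ] ℝ := fun w => ∫ t in (0:ℝ)..T, D2q (t, w) with hU2def
  have hU1d : ∀ w, HasFDerivAt u (U1 w) w := fun w =>
    hasFDerivAt_intervalIntegral (fun w t => Q (t, w)) (fun w t => Φ (Dq (t, w))) 0 T
      (hQc.comp sw) (continuous_const.clm_apply (hDqc.comp sw)) (fun w t => hD1q_at t w) w
  have hU2d : ∀ w, HasFDerivAt U1 (U2 w) w := fun w =>
    hasFDerivAt_intervalIntegral (fun w t => Φ (Dq (t, w))) (fun w t => D2q (t, w)) 0 T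
      (continuous_const.clm_apply (hDqc.comp sw)) (hD2qc.comp sw) (fun w t => hD2q_at t w) w
  have hU2c : Continuous U2 :=
    continuous_intervalIntegral_param (fun w t => D2q (t, w)) 0 T (hD2qc.comp sw)
  have hM0 : 0 ≤ M := le_trans (abs_nonneg _) (hM (0, 0))
  have hubdd : ∀ w, |u w| ≤ M * M * |T| := by
    intro w
    have h := intervalIntegral.norm_integral_le_of_norm_le_const
      (C := M * M) (f := fun t => Q (t, w)) (a := 0) (b := T) (fun t _ => by
        rw [Real.norm_eq_abs, hQdef, abs_mul]
        exact mul_le_mul (hM _) (hM _) (abs_nonneg _) hM0)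
    rw [Real.norm_eq_abs, sub_zero] at h
    exact h
  have hU2app : ∀ (w v v' : ℂ), U2 w v v' = ∫ t in (0:ℝ)..T, D2q (t, w) v v' := by
    intro w v v'
    have hint1 : (∫ t in (0:ℝ)..T, D2q (t, w)) v = ∫ t in (0:ℝ)..T, D2q (t, w) v :=
      ContinuousLinearMap.intervalIntegral_apply
        ((hD2qc.comp (continuous_id.prodMk continuous_const)).intervalIntegrable _ _) v
    have hint2 : IntervalIntegrable (fun t => D2q (t, w) v) volume 0 T :=
      (((hD2qc.comp (continuous_id.prodMk continuous_const)).clm_apply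
        continuous_const).intervalIntegrable _ _)
    rw [hU2def]
    rw [hint1,
      ContinuousLinearMap.intervalIntegral_apply hint2 v']
  -- the nonnegative integrand S
  set S : ℝ × ℂ → ℝ := fun p => 2 * f p * (H2 p (1, 0) (1, 0) + H2 p (0, 1) (0, 1)
      + H2 p (0, Complex.I) (0, Complex.I)) + 2 * g1 p (1, 0) * g1 p (1, 0)
      + 2 * g1 p (0, 1) * g1 p (0, 1)
      + 2 * g1 p (0, Complex.I) * g1 p (0, Complex.I) with hSdef
  have hH2app : ∀ v v' : ℝ × ℂ, Continuous fun p : ℝ × ℂ => H2 p v v' := fun v v' =>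
    (hH2c.clm_apply continuous_const).clm_apply continuous_const
  have hg1app : ∀ v : ℝ × ℂ, Continuous fun p : ℝ × ℂ => g1 p v := fun v =>
    hg1c.clm_apply continuous_const
  have hSc : Continuous S :=
    ((((continuous_const.mul hfc).mul
      (((hH2app _ _).add (hH2app _ _)).add (hH2app _ _))).add
      ((continuous_const.mul (hg1app _)).mul (hg1app _))).add
      ((continuous_const.mul (hg1app _)).mul (hg1app _))).add
      ((continuous_const.mul (hg1app _)).mul (hg1app _))
  have hSnn : ∀ p, 0 ≤ S p := by
    intro p
    have h1 := hsub' p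
    have h2 := hf_nonneg p
    have sq2 : ∀ x : ℝ, 0 ≤ 2 * x * x := fun x => by rw [mul_assoc]; exact mul_nonneg (by norm_num) (mul_self_nonneg x)
    simp only [hSdef]
    have ht1 : 0 ≤ 2 * f p * (H2 p (1, 0) (1, 0) + H2 p (0, 1) (0, 1)
        + H2 p (0, Complex.I) (0, Complex.I)) :=
      mul_nonneg (mul_nonneg (by norm_num) h2) h1
    linarith only [ht1, sq2 (g1 p (1, 0)), sq2 (g1 p ((0:ℝ), (1:ℂ))),
      sq2 (g1 p ((0:ℝ), Complex.I))]
  -- the boundary term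
  set bb : ℂ → ℝ → ℝ := fun w t => 2 * f (t, w) * g1 (t, w) (1, 0) with hbbdef
  have hbd : ∀ (w : ℂ) (t : ℝ), HasDerivAt (bb w)
      (2 * g1 (t, w) (1, 0) * g1 (t, w) (1, 0) + 2 * f (t, w) * H2 (t, w) (1, 0) (1, 0)) t := by
    intro w t
    have hc1 : HasDerivAt (fun t : ℝ => 2 * f (t, w)) (2 * g1 (t, w) (1, 0)) t :=
      ((hfd (t, w)).comp_hasDerivAt t (hline_t t w)).const_mul 2
    have hc2 : HasDerivAt (fun t : ℝ => g1 (t, w) (1, 0)) (H2 (t, w) (1, 0) (1, 0)) t := by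
      have h0 := (hg1d (t, w)).comp_hasDerivAt t (hline_t t w)
      have h := h0.clm_apply (hasDerivAt_const t (((1:ℝ), (0:ℂ)) : ℝ × ℂ))
      simp at h; exact h
    exact hc1.mul hc2
  have hbbper : ∀ w, bb w T = bb w 0 := by
    intro w
    simp only [hbbdef]
    rw [hfTw w, hg1T w]
  -- key formula
  have hPkey : ∀ w : ℂ, U2 w 1 1 + U2 w Complex.I Complex.I = ∫ t in (0:ℝ)..T, S (t, w) := by
    intro w
    have hict : Continuous fun t : ℝ => ((t, w) : ℝ × ℂ) :=
      continuous_id.prodMk continuous_const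
    have hint1 : IntervalIntegrable (fun t => D2q (t, w) 1 1) volume 0 T :=
      ((((hD2qc.comp hict).clm_apply continuous_const).clm_apply
        continuous_const).intervalIntegrable _ _)
    have hint2 : IntervalIntegrable (fun t => D2q (t, w) Complex.I Complex.I) volume 0 T :=
      ((((hD2qc.comp hict).clm_apply continuous_const).clm_apply
        continuous_const).intervalIntegrable _ _)
    have hbd_cont : Continuous fun t => 2 * g1 (t, w) (1, 0) * g1 (t, w) (1, 0)
        + 2 * f (t, w) * H2 (t, w) (1, 0) (1, 0) := by
      apply Continuous.add
      · exact (continuous_const.mul ((hg1c.comp hict).clm_apply continuous_const)).mul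
          ((hg1c.comp hict).clm_apply continuous_const)
      · exact (continuous_const.mul (hfc.comp hict)).mul
          (((hH2c.comp hict).clm_apply continuous_const).clm_apply continuous_const)
    have hS_int : IntervalIntegrable (fun t => S (t, w)) volume 0 T :=
      ((hSc.comp hict).intervalIntegrable _ _)
    rw [hU2app w 1 1, hU2app w Complex.I Complex.I,
      ← intervalIntegral.integral_add hint1 hint2]
    have hptwise : ∀ t : ℝ, D2q (t, w) 1 1 + D2q (t, w) Complex.I Complex.I
        = S (t, w) - (2 * g1 (t, w) (1, 0) * g1 (t, w) (1, 0)
          + 2 * f (t, w) * H2 (t, w) (1, 0) (1, 0)) := by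
      intro t
      rw [hD2qval, hD2qval]
      simp only [hSdef]
      ring
    rw [intervalIntegral.integral_congr (g := fun t => S (t, w)
      - (2 * g1 (t, w) (1, 0) * g1 (t, w) (1, 0)
        + 2 * f (t, w) * H2 (t, w) (1, 0) (1, 0))) (fun t _ => hptwise t)]
    rw [intervalIntegral.integral_sub hS_int (hbd_cont.intervalIntegrable _ _)]
    rw [intervalIntegral.integral_eq_sub_of_hasDerivAt (fun t _ => hbd w t)
      (hbd_cont.intervalIntegrable _ _)]
    rw [hbbper w, sub_self, sub_zero]
  have hpos2 : ∀ w : ℂ, 0 ≤ U2 w 1 1 + U2 w Complex.I Complex.I := by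
    intro w
    rw [hPkey w]
    exact intervalIntegral.integral_nonneg hT.le fun t _ => hSnn _
  -- apply the core lemma
  have hzero := core2d u U1 U2 (M * M * |T|) hU1d hU2d hU2c hubdd hpos2
  -- derive vanishing of the gradient
  have hg1zero : ∀ p : ℝ × ℂ, g1 p = 0 := by
    intro p
    have hSvanish : ∀ (w : ℂ) (t : ℝ), t ∈ Icc (0:ℝ) T → S (t, w) = 0 := by
      intro w t ht
      refine eq_zero_of_nonneg_of_integral_zero (S := fun s => S (s, w)) hT
        ?_ (fun s => hSnn _) ?_ ht
      · exact hSc.comp (continuous_id.prodMk continuous_const)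
      · rw [← hPkey w]
        exact hzero w
    have hvals : ∀ (w : ℂ) (t : ℝ), t ∈ Icc (0:ℝ) T →
        g1 (t, w) (1, 0) = 0 ∧ g1 (t, w) ((0:ℝ), (1:ℂ)) = 0
          ∧ g1 (t, w) ((0:ℝ), Complex.I) = 0 := by
      intro w t ht
      have h0 := hSvanish w t ht
      simp only [hSdef] at h0
      have h1 := hsub' (t, w)
      have h2 := hf_nonneg (t, w)
      have sq2 : ∀ x : ℝ, 0 ≤ 2 * x * x := fun x => by rw [mul_assoc]; exact mul_nonneg (by norm_num) (mul_self_nonneg x)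
      have hm1 := sq2 (g1 (t, w) ((1:ℝ), (0:ℂ)))
      have hm2 := sq2 (g1 (t, w) ((0:ℝ), (1:ℂ)))
      have hm3 := sq2 (g1 (t, w) ((0:ℝ), Complex.I))
      have hm4 : 0 ≤ 2 * f (t, w) * (H2 (t, w) (1, 0) (1, 0) + H2 (t, w) (0, 1) (0, 1)
          + H2 (t, w) (0, Complex.I) (0, Complex.I)) :=
        mul_nonneg (mul_nonneg (by norm_num) h2) h1
      refine ⟨mul_self_eq_zero.1 ?_, mul_self_eq_zero.1 ?_, mul_self_eq_zero.1 ?_⟩ <;>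
        linarith only [h0, hm1, hm2, hm3, hm4]
    have hper : Function.Periodic (fun t : ℝ => g1 (t, p.2)) T := by
      intro t
      have h := hg1per (t, p.2)
      have he : ((t, p.2) : ℝ × ℂ) + ((T:ℝ), (0:ℂ)) = ((t + T : ℝ), p.2) := by
        apply Prod.ext <;> simp
      rwa [he] at h
    obtain ⟨t', ht', heq⟩ := hper.exists_mem_Ico₀ hT p.1
    have h3 := hvals p.2 t' (Ico_subset_Icc_self ht')
    have hp : g1 p = g1 (t', p.2) := by
      have : g1 (p.1, p.2) = g1 (t', p.2) := heq
      simpa using this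
    rw [hp]
    apply ContinuousLinearMap.ext
    intro v
    have hdec : v = v.1 • ((1:ℝ), (0:ℂ)) + v.2.re • ((0:ℝ), (1:ℂ))
        + v.2.im • ((0:ℝ), Complex.I) := by
      apply Prod.ext
      · simp
      · simp [Complex.real_smul]
    rw [hdec]
    simp only [map_add, _root_.map_smul, smul_eq_mul]
    rw [h3.1, h3.2.1, h3.2.2]
    simp
  intro p p'
  exact is_const_of_fderiv_eq_zero hfdiff (fun x => hg1zero x) p p' 


end PeriodicSubharmonic
end
end

section
/- Let (V, Φ) be a torsion-free difference module of finite type, and set d := dim_{ℂ(X)} (ℂ(X) ⊗_{ℂ[X]} V). Then there exists a ℂ[X]-submodule W ⊆ V which is free of rank d such that: (a) the ℂ[X]-submodule of V generated by ⋃_{n∈ℤ} Φⁿ(W) equals V; and (b) the image of ℂ(X) ⊗_{ℂ[X]} W → ℂ(X) ⊗_{ℂ[X]} V spans, i.e. the natural map is surjective. -/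
open Polynomial TensorProduct

noncomputable section

/-- From any spanning set of a finitely generated module one can extract a finite
spanning subset. -/
private lemma exists_finset_subset_span_top {R M : Type*} [Semiring R] [AddCommMonoid M]
    [Module R M] [Module.Finite R M] {s : Set M} (h : Submodule.span R s = ⊤) :
    ∃ t : Finset M, ↑t ⊆ s ∧ Submodule.span R (t : Set M) = ⊤ := by
  classical
  obtain ⟨G, hG⟩ := Module.Finite.fg_top (R := R) (M := M)
  have key : ∀ x : M, ∃ t : Finset M, ↑t ⊆ s ∧ x ∈ Submodule.span R (t : Set M) := by
    intro x
    exact Submodule.mem_span_finite_of_mem_span (by rw [h]; trivial)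
  choose f hf1 hf2 using key
  refine ⟨G.biUnion f, ?_, ?_⟩
  · intro x hx
    simp only [Finset.coe_biUnion, Set.mem_iUnion] at hx
    obtain ⟨y, _, hy⟩ := hx
    exact hf1 y hy
  · rw [eq_top_iff, ← hG]
    refine Submodule.span_le.2 ?_
    intro x hx
    refine Submodule.span_mono ?_ (hf2 x)
    intro z hz
    simp only [Finset.coe_biUnion, Set.mem_iUnion]
    exact ⟨x, hx, hz⟩

/-- Existence of a free lattice in a torsion-free difference module of finite type
(Lemma 17.11.18.1 of the paper).

Here `σ : ℂ[X] → ℂ[X]` is the automorphism `q ↦ q(X + c)` (in the paper `c = 2√−1 λ T`), and a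
difference module is a `ℂ[X]`-module `V` with an additive bijection `Φ` satisfying
`Φ(q • v) = σ(q) • Φ(v)`.  `V` is torsion-free and of finite type: it is generated over the
difference algebra by a finite set, and `ℂ(X) ⊗_{ℂ[X]} V` is finite-dimensional over `ℂ(X)`.
The conclusion produces a `ℂ[X]`-free submodule `W` of rank
`d = dim_{ℂ(X)} (ℂ(X) ⊗ V)` such that the iterates `Φⁿ(W)` generate `V` over `ℂ[X]` and the
natural map `ℂ(X) ⊗ W → ℂ(X) ⊗ V` is surjective. -/
theorem difference_module_free_lattice (c : ℂ) (V : Type*) [AddCommGroup V]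
    [Module (Polynomial ℂ) V] (Φ : AddAut V)
    (hΦ : ∀ (q : Polynomial ℂ) (v : V),
      Φ (q • v) = (q.comp (Polynomial.X + Polynomial.C c)) • Φ v)
    (htf : ∀ (q : Polynomial ℂ) (v : V), q • v = 0 → q = 0 ∨ v = 0)
    (hfg : ∃ S : Finset V,
      Submodule.span (Polynomial ℂ) (⋃ n : ℤ, ⇑(n • Φ) '' (S : Set V)) = ⊤)
    (hfd : FiniteDimensional (RatFunc ℂ) (RatFunc ℂ ⊗[Polynomial ℂ] V)) :
    ∃ W : Submodule (Polynomial ℂ) V,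
      Nonempty (Module.Basis (Fin (Module.finrank (RatFunc ℂ) (RatFunc ℂ ⊗[Polynomial ℂ] V)))
        (Polynomial ℂ) W) ∧
      Submodule.span (Polynomial ℂ) (⋃ n : ℤ, ⇑(n • Φ) '' (W : Set V)) = ⊤ ∧
      Function.Surjective (LinearMap.lTensor (RatFunc ℂ) W.subtype) := by
  classical
  obtain ⟨S, hS⟩ := hfg
  set R := Polynomial ℂ
  set K := RatFunc ℂ
  haveI hflat : Module.Flat R K := IsLocalization.flat K (nonZeroDivisors R)
  haveI : NoZeroSMulDivisors R V :=
    ⟨fun {q v} h => htf q v h⟩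
  -- the images of the generators span `K ⊗ V` over `K`
  set G : Set V := ⋃ n : ℤ, ⇑(n • Φ) '' (S : Set V) with hGdef
  have htop : Submodule.span K (TensorProduct.mk R K V 1 '' G) = ⊤ := by
    have h1 := Submodule.baseChange_span (R := R) (A := K) G
    rw [hS, Submodule.baseChange_top] at h1
    exact h1.symm
  -- extract a finite spanning subset
  obtain ⟨T, hTsub, hTspan⟩ := exists_finset_subset_span_top htop
  obtain ⟨T₀, hT₀sub, hT₀img⟩ := Finset.subset_set_image_iff.1 hTsub
  -- the lattice
  set W : Submodule R V := Submodule.span R ((S : Set V) ∪ (T₀ : Set V)) with hWdef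
  have hSW : (S : Set V) ⊆ (W : Set V) :=
    fun x hx => Submodule.subset_span (Set.mem_union_left _ hx)
  have hT₀W : (T₀ : Set V) ⊆ (W : Set V) :=
    fun x hx => Submodule.subset_span (Set.mem_union_right _ hx)
  haveI : Module.Finite R W := by
    apply Module.Finite.span_of_finite
    exact ((S : Set V).toFinite).union ((T₀ : Set V).toFinite)
  haveI : Module.Free R W := Module.free_of_finite_type_torsion_free'
  -- the base-changed inclusion
  set f : K ⊗[R] W →ₗ[K] K ⊗[R] V := W.subtype.baseChange K with hfdef
  have hinj : Function.Injective f := by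
    have h2 := Module.Flat.lTensor_preserves_injective_linearMap (M := K)
      W.subtype W.injective_subtype
    rw [hfdef]
    rw [LinearMap.baseChange_eq_ltensor]
    exact h2
  have hsurj : Function.Surjective f := by
    rw [← LinearMap.range_eq_top, eq_top_iff, ← hTspan, Submodule.span_le]
    intro x hx
    rw [← hT₀img] at hx
    simp only [Finset.coe_image, Set.mem_image] at hx
    obtain ⟨v, hv, rfl⟩ := hx
    exact ⟨(1 : K) ⊗ₜ (⟨v, hT₀W hv⟩ : W), by simp [hfdef]⟩
  -- identify ranks
  set ι := Module.Free.ChooseBasisIndex R W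
  set b : Module.Basis ι R W := Module.Free.chooseBasis R W
  have e : (K ⊗[R] W) ≃ₗ[K] (K ⊗[R] V) := LinearEquiv.ofBijective f ⟨hinj, hsurj⟩
  have bV : Module.Basis ι K (K ⊗[R] V) := (b.baseChange K).map e
  have hcard : Module.finrank K (K ⊗[R] V) = Fintype.card ι :=
    Module.finrank_eq_card_basis bV
  refine ⟨W, ⟨b.reindex (Fintype.equivFinOfCardEq hcard.symm)⟩, ?_, ?_⟩
  · rw [eq_top_iff, ← hS]
    refine Submodule.span_mono ?_
    exact Set.iUnion_mono fun n => Set.image_mono hSW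
  · have : Function.Surjective (W.subtype.baseChange K) := hsurj
    rwa [LinearMap.baseChange_eq_ltensor] at this

end
end

section
/- Let A_t, A_x, A_y, φ : ℝ³ → M_r(ℂ) be C^∞ maps (coordinates (t,x,y) on ℝ³) satisfying the Bogomolny equations F_{xy} = ∇_t φ, F_{yt} = ∇_x φ, F_{tx} = ∇_y φ. Then for every cyclic permutation (a,b,c) of (t,x,y): (∇_x∇_x + ∇_y∇_y + ∇_t∇_t)(∇_a φ) = 4·[∇_b φ, ∇_c φ] − [φ, [φ, ∇_a φ]]. -/
open scoped Matrix Matrix.Norms.L2Operator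

noncomputable section

namespace Bogomolny

/-- Partial derivatives `∂_t, ∂ₓ, ∂_y` (indexed by `0, 1, 2`) of a matrix-valued function on
`ℝ³ = ℝ × ℝ × ℝ` with coordinates `(t, x, y)`. -/
def pd {r : ℕ} : Fin 3 → ((ℝ × ℝ × ℝ) → Matrix (Fin r) (Fin r) ℂ) →
    (ℝ × ℝ × ℝ) → Matrix (Fin r) (Fin r) ℂ :=
  ![fun F q => deriv (fun s : ℝ => F (s, q.2.1, q.2.2)) q.1,
    fun F q => deriv (fun s : ℝ => F (q.1, s, q.2.2)) q.2.1,
    fun F q => deriv (fun s : ℝ => F (q.1, q.2.1, s)) q.2.2]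

/-- The covariant derivative `∇_κ s = ∂_κ s + [A_κ, s]` on matrix-valued functions, for the
connection with coefficients `A`. -/
def cd {r : ℕ} (A : Fin 3 → (ℝ × ℝ × ℝ) → Matrix (Fin r) (Fin r) ℂ) (i : Fin 3)
    (F : (ℝ × ℝ × ℝ) → Matrix (Fin r) (Fin r) ℂ) : (ℝ × ℝ × ℝ) → Matrix (Fin r) (Fin r) ℂ :=
  fun q => pd i F q + (A i q * F q - F q * A i q)

/-- The curvature `F_{κλ} = ∂_κ A_λ − ∂_λ A_κ + [A_κ, A_λ]`. -/
def curv {r : ℕ} (A : Fin 3 → (ℝ × ℝ × ℝ) → Matrix (Fin r) (Fin r) ℂ) (i j : Fin 3) :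
    (ℝ × ℝ × ℝ) → Matrix (Fin r) (Fin r) ℂ :=
  fun q => pd i (A j) q - pd j (A i) q + (A i q * A j q - A j q * A i q)

section Helpers

variable {r : ℕ}

/-- basis vectors -/
def E : Fin 3 → ℝ × ℝ × ℝ := ![(1,0,0),(0,1,0),(0,0,1)]

/-- coordinate lines -/
def Lf : Fin 3 → (ℝ × ℝ × ℝ) → ℝ → ℝ × ℝ × ℝ :=
  ![fun q s => (s, q.2.1, q.2.2), fun q s => (q.1, s, q.2.2), fun q s => (q.1, q.2.1, s)]

def co : Fin 3 → (ℝ × ℝ × ℝ) → ℝ := ![fun q => q.1, fun q => q.2.1, fun q => q.2.2]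

lemma pd_def (i : Fin 3) (F : (ℝ×ℝ×ℝ) → Matrix (Fin r) (Fin r) ℂ) (q : ℝ×ℝ×ℝ) :
    pd i F q = deriv (fun s => F (Lf i q s)) (co i q) := by
  fin_cases i <;> rfl

lemma L_at (i : Fin 3) (q : ℝ×ℝ×ℝ) : Lf i q (co i q) = q := by
  fin_cases i <;> rfl

lemma hasDerivAt_L (i : Fin 3) (q : ℝ×ℝ×ℝ) : HasDerivAt (Lf i q) (E i) (co i q) := by
  fin_cases i
  · exact (hasDerivAt_id _).prodMk (hasDerivAt_const _ _)
  · exact (hasDerivAt_const _ _).prodMk ((hasDerivAt_id _).prodMk (hasDerivAt_const _ _))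
  · exact (hasDerivAt_const _ _).prodMk ((hasDerivAt_const _ _).prodMk (hasDerivAt_id _))

lemma hasDerivAt_pd {F : (ℝ×ℝ×ℝ) → Matrix (Fin r) (Fin r) ℂ} {q : ℝ×ℝ×ℝ}
    (hF : DifferentiableAt ℝ F q) (i : Fin 3) :
    HasDerivAt (fun s => F (Lf i q s)) (fderiv ℝ F q (E i)) (co i q) := by
  have h : HasFDerivAt F (fderiv ℝ F q) (Lf i q (co i q)) := by
    rw [L_at]; exact hF.hasFDerivAt
  exact h.comp_hasDerivAt _ (hasDerivAt_L i q)

lemma pd_eq_fderiv {F : (ℝ×ℝ×ℝ) → Matrix (Fin r) (Fin r) ℂ} {q : ℝ×ℝ×ℝ}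
    (hF : DifferentiableAt ℝ F q) (i : Fin 3) :
    pd i F q = fderiv ℝ F q (E i) := by
  rw [pd_def]; exact (hasDerivAt_pd hF i).deriv

variable {F G : (ℝ×ℝ×ℝ) → Matrix (Fin r) (Fin r) ℂ} {q : ℝ×ℝ×ℝ}

lemma Smooth.dAt (hF : ContDiff ℝ (⊤ : ℕ∞) F) : DifferentiableAt ℝ F q :=
  (hF.differentiable (by simp)).differentiableAt

lemma smooth_pd (hF : ContDiff ℝ (⊤ : ℕ∞) F) (i : Fin 3) : ContDiff ℝ (⊤ : ℕ∞) (pd i F) := by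
  have h : pd i F = fun q => fderiv ℝ F q (E i) :=
    funext fun q => pd_eq_fderiv (Smooth.dAt hF) i
  rw [h]
  exact (ContinuousLinearMap.apply ℝ (Matrix (Fin r) (Fin r) ℂ) (E i)).contDiff.comp
    (hF.fderiv_right (by exact_mod_cast le_top))

lemma pd_add (hF : DifferentiableAt ℝ F q) (hG : DifferentiableAt ℝ G q) (i : Fin 3) :
    pd i (fun p => F p + G p) q = pd i F q + pd i G q := by
  rw [pd_def i (fun p => F p + G p) q, pd_eq_fderiv hF, pd_eq_fderiv hG]
  exact ((hasDerivAt_pd hF i).add (hasDerivAt_pd hG i)).deriv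

lemma pd_sub (hF : DifferentiableAt ℝ F q) (hG : DifferentiableAt ℝ G q) (i : Fin 3) :
    pd i (fun p => F p - G p) q = pd i F q - pd i G q := by
  rw [pd_def i (fun p => F p - G p) q, pd_eq_fderiv hF, pd_eq_fderiv hG]
  exact ((hasDerivAt_pd hF i).sub (hasDerivAt_pd hG i)).deriv

lemma pd_neg (hF : DifferentiableAt ℝ F q) (i : Fin 3) :
    pd i (fun p => -F p) q = -pd i F q := by
  rw [pd_def i (fun p => -F p) q, pd_eq_fderiv hF]
  exact ((hasDerivAt_pd hF i).neg).deriv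

lemma pd_mul (hF : DifferentiableAt ℝ F q) (hG : DifferentiableAt ℝ G q) (i : Fin 3) :
    pd i (fun p => F p * G p) q = pd i F q * G q + F q * pd i G q := by
  rw [pd_def i (fun p => F p * G p) q, pd_eq_fderiv hF, pd_eq_fderiv hG]
  have h := ((hasDerivAt_pd hF i).mul (hasDerivAt_pd hG i)).deriv
  rw [L_at] at h
  exact h

lemma pd_const (c : Matrix (Fin r) (Fin r) ℂ) (i : Fin 3) : pd i (fun _ => c) q = 0 := by
  rw [pd_def]
  exact deriv_const _ _

lemma pd_symm (hF : ContDiff ℝ (⊤ : ℕ∞) F) (i j : Fin 3) (q : ℝ×ℝ×ℝ) :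
    pd i (pd j F) q = pd j (pd i F) q := by
  have hd : ContDiff ℝ (⊤ : ℕ∞) (fderiv ℝ F) := hF.fderiv_right (by exact_mod_cast le_top)
  have key : ∀ v w : ℝ×ℝ×ℝ, fderiv ℝ (fun p => fderiv ℝ F p w) q v
      = fderiv ℝ (fderiv ℝ F) q v w := by
    intro v w
    have h : HasFDerivAt (fun p => fderiv ℝ F p w)
        ((ContinuousLinearMap.apply ℝ (Matrix (Fin r) (Fin r) ℂ) w).comp
          (fderiv ℝ (fderiv ℝ F) q)) q :=
      (ContinuousLinearMap.apply ℝ (Matrix (Fin r) (Fin r) ℂ) w).hasFDerivAt.comp q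
        ((hd.differentiable (by simp)).differentiableAt).hasFDerivAt
    rw [h.fderiv]; rfl
  have hpdF : ∀ k : Fin 3, pd k F = fun p => fderiv ℝ F p (E k) := fun k =>
    funext fun p => pd_eq_fderiv (Smooth.dAt hF) k
  have symm := ((hF.contDiffAt (x := q)).isSymmSndFDerivAt
    (n := ((⊤:ℕ∞) : WithTop ℕ∞))
    (by rw [minSmoothness_of_isRCLikeNormedField]
        exact WithTop.coe_le_coe.mpr le_top)).eq
  have hdj : DifferentiableAt ℝ (fun p => fderiv ℝ F p (E j)) q :=
    Smooth.dAt ((ContinuousLinearMap.apply ℝ (Matrix (Fin r) (Fin r) ℂ) (E j)).contDiff.comp hd)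
  have hdi : DifferentiableAt ℝ (fun p => fderiv ℝ F p (E i)) q :=
    Smooth.dAt ((ContinuousLinearMap.apply ℝ (Matrix (Fin r) (Fin r) ℂ) (E i)).contDiff.comp hd)
  rw [hpdF j, hpdF i, pd_eq_fderiv hdj i, pd_eq_fderiv hdi j, key, key, symm]

end Helpers

section CD

variable {r : ℕ} (A : Fin 3 → (ℝ×ℝ×ℝ) → Matrix (Fin r) (Fin r) ℂ)
variable {F G : (ℝ×ℝ×ℝ) → Matrix (Fin r) (Fin r) ℂ} {q : ℝ×ℝ×ℝ}

lemma cd_apply (i : Fin 3) (F : (ℝ×ℝ×ℝ) → Matrix (Fin r) (Fin r) ℂ) (q : ℝ×ℝ×ℝ) :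
    cd A i F q = pd i F q + (A i q * F q - F q * A i q) := rfl

lemma curv_apply (i j : Fin 3) (q : ℝ×ℝ×ℝ) :
    curv A i j q = pd i (A j) q - pd j (A i) q + (A i q * A j q - A j q * A i q) := rfl

variable (hA : ∀ i, ContDiff ℝ (⊤ : ℕ∞) (A i))

include hA

lemma smooth_cd (hF : ContDiff ℝ (⊤ : ℕ∞) F) (i : Fin 3) :
    ContDiff ℝ (⊤ : ℕ∞) (cd A i F) :=
  (smooth_pd hF i).add (((hA i).mul hF).sub (hF.mul (hA i)))

lemma smooth_curv (i j : Fin 3) : ContDiff ℝ (⊤ : ℕ∞) (curv A i j) :=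
  ((smooth_pd (hA j) i).sub (smooth_pd (hA i) j)).add
    (((hA i).mul (hA j)).sub ((hA j).mul (hA i)))

omit hA

lemma cd_add' (hF : DifferentiableAt ℝ F q) (hG : DifferentiableAt ℝ G q) (i : Fin 3) :
    cd A i (fun p => F p + G p) q = cd A i F q + cd A i G q := by
  simp only [cd_apply]
  rw [pd_add hF hG]
  noncomm_ring

lemma cd_sub' (hF : DifferentiableAt ℝ F q) (hG : DifferentiableAt ℝ G q) (i : Fin 3) :
    cd A i (fun p => F p - G p) q = cd A i F q - cd A i G q := by
  simp only [cd_apply]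
  rw [pd_sub hF hG]
  noncomm_ring

lemma cd_neg' (hF : DifferentiableAt ℝ F q) (i : Fin 3) :
    cd A i (fun p => -F p) q = -cd A i F q := by
  simp only [cd_apply]
  rw [pd_neg hF]
  noncomm_ring

lemma cd_mul' (hF : DifferentiableAt ℝ F q) (hG : DifferentiableAt ℝ G q) (i : Fin 3) :
    cd A i (fun p => F p * G p) q = cd A i F q * G q + F q * cd A i G q := by
  simp only [cd_apply]
  rw [pd_mul hF hG]
  noncomm_ring

lemma cd_zero' (i : Fin 3) :
    cd A i (fun _ => (0 : Matrix (Fin r) (Fin r) ℂ)) q = 0 := by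
  rw [cd_apply, pd_const]
  simp

lemma curv_self (i : Fin 3) (q : ℝ×ℝ×ℝ) : curv A i i q = 0 := by
  rw [curv_apply]; noncomm_ring

lemma curv_anti (i j : Fin 3) (q : ℝ×ℝ×ℝ) : curv A i j q = -curv A j i q := by
  rw [curv_apply, curv_apply]; noncomm_ring

include hA

lemma pd_cd_expand (hF : ContDiff ℝ (⊤ : ℕ∞) F) (i j : Fin 3) (q : ℝ×ℝ×ℝ) :
    pd i (cd A j F) q = pd i (pd j F) q +
      ((pd i (A j) q * F q + A j q * pd i F q) - (pd i F q * A j q + F q * pd i (A j) q)) := by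
  have h0 : pd i (cd A j F) q
      = pd i (fun p => pd j F p + (A j p * F p - F p * A j p)) q := rfl
  rw [h0,
    pd_add (G := fun p => A j p * F p - F p * A j p) (Smooth.dAt (smooth_pd hF j))
      (((Smooth.dAt (hA j)).mul (Smooth.dAt hF)).sub ((Smooth.dAt hF).mul (Smooth.dAt (hA j)))),
    pd_sub (F := fun p => A j p * F p) (G := fun p => F p * A j p) ((Smooth.dAt (hA j)).mul (Smooth.dAt hF)) ((Smooth.dAt hF).mul (Smooth.dAt (hA j))),
    pd_mul (Smooth.dAt (hA j)) (Smooth.dAt hF), pd_mul (Smooth.dAt hF) (Smooth.dAt (hA j))]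

lemma pd_curv_expand (i j k : Fin 3) (q : ℝ×ℝ×ℝ) :
    pd i (curv A j k) q = pd i (pd j (A k)) q - pd i (pd k (A j)) q +
      ((pd i (A j) q * A k q + A j q * pd i (A k) q)
        - (pd i (A k) q * A j q + A k q * pd i (A j) q)) := by
  have h0 : pd i (curv A j k) q
      = pd i (fun p => (pd j (A k) p - pd k (A j) p) + (A j p * A k p - A k p * A j p)) q := rfl
  rw [h0,
    pd_add (F := fun p => pd j (A k) p - pd k (A j) p) (G := fun p => A j p * A k p - A k p * A j p) ((Smooth.dAt (smooth_pd (hA k) j)).sub (Smooth.dAt (smooth_pd (hA j) k)))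
      (((Smooth.dAt (hA j)).mul (Smooth.dAt (hA k))).sub
        ((Smooth.dAt (hA k)).mul (Smooth.dAt (hA j)))),
    pd_sub (Smooth.dAt (smooth_pd (hA k) j)) (Smooth.dAt (smooth_pd (hA j) k)),
    pd_sub (F := fun p => A j p * A k p) (G := fun p => A k p * A j p) ((Smooth.dAt (hA j)).mul (Smooth.dAt (hA k)))
      ((Smooth.dAt (hA k)).mul (Smooth.dAt (hA j))),
    pd_mul (Smooth.dAt (hA j)) (Smooth.dAt (hA k)),
    pd_mul (Smooth.dAt (hA k)) (Smooth.dAt (hA j))]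

lemma cd_comm (hF : ContDiff ℝ (⊤ : ℕ∞) F) (i j : Fin 3) (q : ℝ×ℝ×ℝ) :
    cd A i (cd A j F) q = cd A j (cd A i F) q
      + (curv A i j q * F q - F q * curv A i j q) := by
  rw [cd_apply A i (cd A j F) q, cd_apply A j (cd A i F) q,
    pd_cd_expand A hA hF i j q, pd_cd_expand A hA hF j i q,
    cd_apply A j F q, cd_apply A i F q, curv_apply, pd_symm hF i j]
  noncomm_ring

lemma bianchi (i j k : Fin 3) (q : ℝ×ℝ×ℝ) :
    cd A i (curv A j k) q + cd A j (curv A k i) q + cd A k (curv A i j) q = 0 := by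
  rw [cd_apply A i (curv A j k) q, cd_apply A j (curv A k i) q, cd_apply A k (curv A i j) q,
    pd_curv_expand A hA i j k q, pd_curv_expand A hA j k i q, pd_curv_expand A hA k i j q,
    curv_apply A j k q, curv_apply A k i q, curv_apply A i j q,
    pd_symm (hA k) j i, pd_symm (hA j) k i, pd_symm (hA i) k j]
  noncomm_ring

include hA

lemma cdcd (hF : ContDiff ℝ (⊤ : ℕ∞) F) (i j : Fin 3) (q : ℝ×ℝ×ℝ) :
    cd A i (cd A i (cd A j F)) q = cd A j (cd A i (cd A i F)) q
      + ((curv A i j q * cd A i F q - cd A i F q * curv A i j q)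
        + (curv A i j q * cd A i F q - cd A i F q * curv A i j q))
      + (cd A i (curv A i j) q * F q - F q * cd A i (curv A i j) q) := by
  have e1 : cd A i (cd A j F)
      = fun p => cd A j (cd A i F) p + (curv A i j p * F p - F p * curv A i j p) :=
    funext fun p => cd_comm A hA hF i j p
  rw [e1,
    cd_add' A (G := fun p => curv A i j p * F p - F p * curv A i j p) (Smooth.dAt (smooth_cd A hA (smooth_cd A hA hF i) j))
      (((Smooth.dAt (smooth_curv A hA i j)).mul (Smooth.dAt hF)).sub
        ((Smooth.dAt hF).mul (Smooth.dAt (smooth_curv A hA i j)))),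
    cd_comm A hA (smooth_cd A hA hF i) i j q,
    cd_sub' A (F := fun p => curv A i j p * F p) (G := fun p => F p * curv A i j p) ((Smooth.dAt (smooth_curv A hA i j)).mul (Smooth.dAt hF))
      ((Smooth.dAt hF).mul (Smooth.dAt (smooth_curv A hA i j))),
    cd_mul' A (Smooth.dAt (smooth_curv A hA i j)) (Smooth.dAt hF),
    cd_mul' A (Smooth.dAt hF) (Smooth.dAt (smooth_curv A hA i j))]
  noncomm_ring

omit hA in
lemma four_smul (x : Matrix (Fin r) (Fin r) ℂ) : (4:ℂ) • x = x + x + x + x := by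
  rw [show (4:ℂ) = 1+1+1+1 by norm_num, add_smul, add_smul, add_smul, one_smul]

lemma key (a b c : Fin 3) (φ : (ℝ×ℝ×ℝ) → Matrix (Fin r) (Fin r) ℂ)
    (hφ : ContDiff ℝ (⊤ : ℕ∞) φ)
    (hbc : curv A b c = cd A a φ) (hca : curv A c a = cd A b φ)
    (hab : curv A a b = cd A c φ) (q : ℝ×ℝ×ℝ) :
    cd A a (cd A a (cd A a φ)) q + cd A b (cd A b (cd A a φ)) q
        + cd A c (cd A c (cd A a φ)) q =
      (4 : ℂ) • (cd A b φ q * cd A c φ q - cd A c φ q * cd A b φ q) -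
        (φ q * (φ q * cd A a φ q - cd A a φ q * φ q) -
          (φ q * cd A a φ q - cd A a φ q * φ q) * φ q) := by
  have Ha := cdcd A hA hφ a a q
  have Hb := cdcd A hA hφ b a q
  have Hc := cdcd A hA hφ c a q
  -- the covariant Laplacian of φ vanishes
  have lap : ∀ p, cd A a (cd A a φ) p + cd A b (cd A b φ) p + cd A c (cd A c φ) p = 0 := by
    intro p
    have hb := bianchi A hA a b c p
    rw [hbc, hca, hab] at hb
    exact hb
  have hz : cd A a (fun p => cd A a (cd A a φ) p
      + (cd A b (cd A b φ) p + cd A c (cd A c φ) p)) q = 0 := by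
    rw [show (fun p => cd A a (cd A a φ) p + (cd A b (cd A b φ) p + cd A c (cd A c φ) p))
        = (fun _ : ℝ×ℝ×ℝ => (0 : Matrix (Fin r) (Fin r) ℂ)) from
      funext fun p => by rw [← add_assoc]; exact lap p]
    exact cd_zero' A a
  have hsplit : cd A a (fun p => cd A a (cd A a φ) p
        + (cd A b (cd A b φ) p + cd A c (cd A c φ) p)) q
      = cd A a (cd A a (cd A a φ)) q
        + (cd A a (cd A b (cd A b φ)) q + cd A a (cd A c (cd A c φ)) q) := by
    rw [cd_add' A (G := fun p => cd A b (cd A b φ) p + cd A c (cd A c φ) p) (Smooth.dAt (smooth_cd A hA (smooth_cd A hA hφ a) a))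
        ((Smooth.dAt (smooth_cd A hA (smooth_cd A hA hφ b) b)).add
          (Smooth.dAt (smooth_cd A hA (smooth_cd A hA hφ c) c))),
      cd_add' A (Smooth.dAt (smooth_cd A hA (smooth_cd A hA hφ b) b))
        (Smooth.dAt (smooth_cd A hA (smooth_cd A hA hφ c) c))]
  have hT : cd A a (cd A a (cd A a φ)) q
      = -(cd A a (cd A b (cd A b φ)) q + cd A a (cd A c (cd A c φ)) q) :=
    eq_neg_of_add_eq_zero_left (by rw [← hsplit]; exact hz)
  -- values of the curvature via the Bogomolny equations
  have faa : cd A a (curv A a a) q = 0 := by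
    rw [show curv A a a = (fun _ : ℝ×ℝ×ℝ => (0 : Matrix (Fin r) (Fin r) ℂ)) from
      funext fun p => curv_self A a p]
    exact cd_zero' A a
  have fba : cd A b (curv A b a) q = -(cd A b (cd A c φ) q) := by
    rw [show curv A b a = fun p => -(cd A c φ p) from
      funext fun p => by rw [curv_anti A b a p, congrFun hab p]]
    exact cd_neg' A (Smooth.dAt (smooth_cd A hA hφ c)) b
  have fca : cd A c (curv A c a) q = cd A c (cd A b φ) q := by rw [hca]
  have vaa : curv A a a q = 0 := curv_self A a q
  have vba : curv A b a q = -(cd A c φ q) := by rw [curv_anti A b a q, congrFun hab q]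
  have vca : curv A c a q = cd A b φ q := congrFun hca q
  have hswap : cd A b (cd A c φ) q = cd A c (cd A b φ) q
      + (cd A a φ q * φ q - φ q * cd A a φ q) := by
    have h := cd_comm A hA hφ b c q
    rw [congrFun hbc q] at h
    exact h
  rw [Ha, Hb, Hc, faa, fba, fca, vaa, vba, vca, hswap, hT, four_smul]
  noncomm_ring

end CD

/-- Weitzenböck-type identity for monopoles (Lemma 16.9.10.62 of the paper): if the Bogomolny
equations `F_{xy} = ∇_t φ`, `F_{yt} = ∇ₓ φ`, `F_{tx} = ∇_y φ` hold, then for every cyclic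
permutation `(a,b,c)` of `(t,x,y)` one has
`(∇ₓ² + ∇_y² + ∇_t²)(∇_a φ) = 4[∇_b φ, ∇_c φ] − [φ, [φ, ∇_a φ]]`.
Indices: `0 = t`, `1 = x`, `2 = y`. -/
theorem weitzenboeck (r : ℕ) (A : Fin 3 → (ℝ × ℝ × ℝ) → Matrix (Fin r) (Fin r) ℂ)
    (φ : (ℝ × ℝ × ℝ) → Matrix (Fin r) (Fin r) ℂ)
    (hA : ∀ i, ContDiff ℝ (⊤ : ℕ∞) (A i)) (hφ : ContDiff ℝ (⊤ : ℕ∞) φ)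
    (h1 : curv A 1 2 = cd A 0 φ) (h2 : curv A 2 0 = cd A 1 φ) (h3 : curv A 0 1 = cd A 2 φ) :
    ∀ a b c : Fin 3,
      ((a, b, c) = ((0 : Fin 3), (1 : Fin 3), (2 : Fin 3)) ∨
        (a, b, c) = (1, 2, 0) ∨ (a, b, c) = (2, 0, 1)) →
      ∀ q : ℝ × ℝ × ℝ,
        cd A 1 (cd A 1 (cd A a φ)) q + cd A 2 (cd A 2 (cd A a φ)) q +
            cd A 0 (cd A 0 (cd A a φ)) q =
          (4 : ℂ) • (cd A b φ q * cd A c φ q - cd A c φ q * cd A b φ q) -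
            (φ q * (φ q * cd A a φ q - cd A a φ q * φ q) -
              (φ q * cd A a φ q - cd A a φ q * φ q) * φ q) := by

  intro a b c hcyc q
  rcases hcyc with h | h | h
  · obtain ⟨ha, hb, hc⟩ : a = 0 ∧ b = 1 ∧ c = 2 := by simpa [Prod.ext_iff] using h
    subst ha; subst hb; subst hc
    have k := key A hA 0 1 2 φ hφ h1 h2 h3 q
    rw [← k]; abel
  · obtain ⟨ha, hb, hc⟩ : a = 1 ∧ b = 2 ∧ c = 0 := by simpa [Prod.ext_iff] using h
    subst ha; subst hb; subst hc
    have k := key A hA 1 2 0 φ hφ h2 h3 h1 q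
    exact k
  · obtain ⟨ha, hb, hc⟩ : a = 2 ∧ b = 0 ∧ c = 1 := by simpa [Prod.ext_iff] using h
    subst ha; subst hb; subst hc
    have k := key A hA 2 0 1 φ hφ h3 h1 h2 q
    rw [← k]; abel


end Bogomolny
end
end
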